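/- arXiv:1907.03328 — 8 statements merged into one kernel-verified Lean document; each statement's English description precedes it below -/
import Mathlib

section
/- Let n ≥ 2 and n−2 < Δ ≤ n. For any two distinct sign vectors λ, λ' ∈ {−1,+1}ⁿ each with ∏λᵢ = ∏λ'ᵢ = −1, the regions {x ∈ [−1,1]ⁿ : ∑λᵢxᵢ > Δ} and {x ∈ [−1,1]ⁿ : ∑λ'ᵢxᵢ > Δ} are disjoint; moreover the hyperplane pieces {x ∈ [−1,1]ⁿ : ∑λᵢxᵢ = Δ} and {x ∈ [−1,1]ⁿ : ∑λ'ᵢxᵢ = Δ} are disjoint. -/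
open Finset

def IsOddSign (n : ℕ) (l : Fin n → ℝ) : Prop :=
  (∀ i, l i = 1 ∨ l i = -1) ∧ (∏ i, l i) = -1

noncomputable def s1 (n : ℕ) (x : Fin n → ℝ) : ℝ :=
  sSup ((fun l => ∑ i, l i * x i) '' {l | IsOddSign n l})

def Cube (n : ℕ) : Set (Fin n → ℝ) := {x | ∀ i, x i ∈ Set.Icc (-1:ℝ) 1}

def NPoly (n : ℕ) (Δ : ℝ) : Set (Fin n → ℝ) :=
  {x | x ∈ Cube n ∧ ∀ l, IsOddSign n l → (∑ i, l i * x i) ≤ Δ}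

lemma key_bound (n : ℕ) (l l' : Fin n → ℝ) (hl : IsOddSign n l) (hl' : IsOddSign n l')
    (hne : l ≠ l') (x : Fin n → ℝ) (hx : x ∈ Cube n) :
    (∑ i, l i * x i) + (∑ i, l' i * x i) ≤ 2 * ((n : ℝ) - 2) := by
  obtain ⟨hl1, hl2⟩ := hl
  obtain ⟨hl'1, hl'2⟩ := hl'
  classical
  set D := Finset.univ.filter (fun i => l i ≠ l' i) with hD
  have hDmem : ∀ i, i ∈ D ↔ l i ≠ l' i := by intro i; simp [hD]
  have hprod : ∏ i, (l i * l' i) = (-1:ℝ) ^ D.card := by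
    rw [← Finset.prod_filter_mul_prod_filter_not Finset.univ (fun i => l i ≠ l' i)]
    have h1 : ∏ i ∈ D, (l i * l' i) = (-1:ℝ) ^ D.card := by
      rw [Finset.prod_congr rfl (g := fun _ => (-1:ℝ)), Finset.prod_const]
      intro i hi
      rw [hDmem] at hi
      rcases hl1 i with h | h <;> rcases hl'1 i with h' | h' <;>
        simp [h, h'] at hi ⊢
    have h2 : ∏ i ∈ Finset.univ.filter (fun i => ¬ l i ≠ l' i), (l i * l' i) = 1 := by
      apply Finset.prod_eq_one
      intro i hi
      simp only [Finset.mem_filter, not_not] at hi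
      rcases hl1 i with h | h <;> simp [h, ← hi.2]
    rw [h2, mul_one]; exact h1
  have hone : (1:ℝ) = (-1:ℝ) ^ D.card := by
    rw [← hprod, Finset.prod_mul_distrib, hl2, hl'2]; norm_num
  have heven : Even D.card := by
    by_contra hodd
    rw [Nat.not_even_iff_odd] at hodd
    rw [hodd.neg_one_pow] at hone
    norm_num at hone
  have hDne : D.Nonempty := by
    rcases Function.ne_iff.mp hne with ⟨i, hi⟩
    exact ⟨i, (hDmem i).mpr hi⟩
  have hD2 : 2 ≤ D.card := by
    rcases heven with ⟨k, hk⟩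
    have : 1 ≤ D.card := Finset.card_pos.mpr hDne
    omega
  have hsum : (∑ i, l i * x i) + (∑ i, l' i * x i) = ∑ i, (l i + l' i) * x i := by
    rw [← Finset.sum_add_distrib]
    congr 1; funext i; ring
  rw [hsum]
  have hsplit : ∑ i, (l i + l' i) * x i
      = ∑ i ∈ D, (l i + l' i) * x i
        + ∑ i ∈ Finset.univ.filter (fun i => ¬ l i ≠ l' i), (l i + l' i) * x i := by
    rw [← Finset.sum_filter_add_sum_filter_not Finset.univ (fun i => l i ≠ l' i)]
  rw [hsplit]
  have hzero : ∑ i ∈ D, (l i + l' i) * x i = 0 := by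
    apply Finset.sum_eq_zero
    intro i hi
    rw [hDmem] at hi
    rcases hl1 i with h | h <;> rcases hl'1 i with h' | h' <;>
      simp [h, h'] at hi ⊢
  rw [hzero, zero_add]
  have hle : ∑ i ∈ Finset.univ.filter (fun i => ¬ l i ≠ l' i), (l i + l' i) * x i
      ≤ ∑ _i ∈ Finset.univ.filter (fun i => ¬ l i ≠ l' i), (2:ℝ) := by
    apply Finset.sum_le_sum
    intro i _
    have hxi := hx i
    obtain ⟨hx1, hx2⟩ := hxi
    have habs : |l i + l' i| ≤ 2 := by
      rcases hl1 i with h | h <;> rcases hl'1 i with h' | h' <;> simp [h, h'] <;> norm_num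
    calc (l i + l' i) * x i ≤ |(l i + l' i) * x i| := le_abs_self _
      _ = |l i + l' i| * |x i| := abs_mul _ _
      _ ≤ 2 * 1 := by
          apply mul_le_mul habs (abs_le.mpr ⟨hx1, hx2⟩) (abs_nonneg _) (by norm_num)
      _ = 2 := by norm_num
  refine hle.trans ?_
  rw [Finset.sum_const, nsmul_eq_mul]
  have hcard : (Finset.univ.filter (fun i => ¬ l i ≠ l' i)).card = n - D.card := by
    rw [Finset.filter_not, Finset.card_sdiff_of_subset (Finset.filter_subset _ _)]
    simp [hD]
  rw [hcard]
  have hDn : D.card ≤ n := by simpa using Finset.card_le_card (Finset.subset_univ D) |>.trans (by simp)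
  have : ((n - D.card : ℕ) : ℝ) ≤ (n:ℝ) - 2 := by
    rw [Nat.cast_sub hDn]
    have : (2:ℝ) ≤ (D.card : ℝ) := by exact_mod_cast hD2
    linarith
  nlinarith [this]

theorem stmt6 (n : ℕ) (hn : 2 ≤ n) (Δ : ℝ) (hΔ1 : (n:ℝ) - 2 < Δ) (hΔ2 : Δ ≤ n)
    (l l' : Fin n → ℝ) (hl : IsOddSign n l) (hl' : IsOddSign n l') (hne : l ≠ l') :
    (∀ x ∈ Cube n, ¬(Δ < (∑ i, l i * x i) ∧ Δ < (∑ i, l' i * x i))) ∧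
    (∀ x ∈ Cube n, ¬((∑ i, l i * x i) = Δ ∧ (∑ i, l' i * x i) = Δ)) := by
  constructor
  · intro x hx ⟨h1, h2⟩
    have := key_bound n l l' hl hl' hne x hx
    linarith
  · intro x hx ⟨h1, h2⟩
    have := key_bound n l l' hl hl' hne x hx
    linarith
end

section
/- Let n ≥ 2 and Δ = n−2. Then the union of the hyperplane segments {x ∈ [−1,1]ⁿ : ∑λᵢxᵢ = n−2}, taken over all sign vectors λ ∈ {−1,+1}ⁿ with ∏λᵢ = −1, is contained in the boundary of the convex hull of the even vertices of [−1,1]ⁿ (the n-demicube). -/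
open Finset

theorem stmt7 (n : ℕ) (hn : 2 ≤ n) (l : Fin n → ℝ) (hl : IsOddSign n l)
    (x : Fin n → ℝ) (hx : x ∈ Cube n) (h : (∑ i, l i * x i) = (n:ℝ) - 2) :
    x ∈ frontier
      (convexHull ℝ {v : Fin n → ℝ | (∀ i, v i = 1 ∨ v i = -1) ∧ (∏ i, v i) = 1}) := by
  obtain ⟨hl1, hl2⟩ := hl
  set S := {v : Fin n → ℝ | (∀ i, v i = 1 ∨ v i = -1) ∧ (∏ i, v i) = 1} with hS
  have hlsq : ∀ i, l i * l i = 1 := by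
    intro i; rcases hl1 i with h' | h' <;> rw [h'] <;> norm_num
  -- bound on S
  have hbound : ∀ v ∈ S, (∑ i, l i * v i) ≤ (n:ℝ) - 2 := by
    intro v hv
    have hw : ∀ i, l i * v i = 1 ∨ l i * v i = -1 := by
      intro i; rcases hl1 i with h' | h' <;> rcases hv.1 i with h'' | h'' <;>
        rw [h', h''] <;> norm_num
    have hprod : (∏ i, l i * v i) = -1 := by
      rw [Finset.prod_mul_distrib, hl2, hv.2]; ring
    have hex : ∃ j, l j * v j = -1 := by
      by_contra he; push_neg at he
      have hall : ∀ i, l i * v i = 1 := fun i => (hw i).resolve_right (he i)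
      simp [hall] at hprod
      norm_num at hprod
    obtain ⟨j, hj⟩ := hex
    have h1 : ∑ i ∈ univ.erase j, l i * v i ≤ (n : ℝ) - 1 := by
      calc ∑ i ∈ univ.erase j, l i * v i ≤ ∑ _i ∈ univ.erase j, (1:ℝ) := by
            apply Finset.sum_le_sum; intro i _
            rcases hw i with h' | h' <;> rw [h'] <;> norm_num
        _ = (n : ℝ) - 1 := by
            rw [Finset.sum_const, Finset.card_erase_of_mem (mem_univ j), nsmul_eq_mul, mul_one]
            have h1n : (1:ℕ) ≤ n := by omega
            simp only [Finset.card_univ, Fintype.card_fin]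
            rw [Nat.cast_sub h1n, Nat.cast_one]
    have h2 : (∑ i, l i * v i) = l j * v j + ∑ i ∈ univ.erase j, l i * v i :=
      (Finset.add_sum_erase univ (fun i => l i * v i) (mem_univ j)).symm
    rw [h2, hj]
    linarith
  set f : (Fin n → ℝ) → ℝ := fun w => ∑ i, l i * w i with hf
  have hlin : IsLinearMap ℝ f := by
    constructor
    · intro a b; simp [hf, mul_add, Finset.sum_add_distrib]
    · intro c a; simp [hf, Finset.mul_sum]; congr 1; funext i; ring
  have hsub : convexHull ℝ S ⊆ {w | f w ≤ (n:ℝ) - 2} :=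
    convexHull_min hbound (convex_halfSpace_le hlin _)
  -- membership in hull
  set c : Fin n → ℝ := fun j => (1 - l j * x j) / 2 with hc
  set v : Fin n → Fin n → ℝ := fun j i => if i = j then -l i else l i with hv
  have hc0 : ∀ j, 0 ≤ c j := by
    intro j
    have h1 : l j * x j ≤ 1 := by
      have := abs_mul (l j) (x j)
      have hx1 : |x j| ≤ 1 := abs_le.mpr ⟨(hx j).1, (hx j).2⟩
      have hl1' : |l j| = 1 := by rcases hl1 j with h' | h' <;> rw [h'] <;> norm_num
      calc l j * x j ≤ |l j * x j| := le_abs_self _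
        _ = |l j| * |x j| := abs_mul _ _
        _ ≤ 1 := by rw [hl1']; linarith
    simp [hc]; linarith
  have hcsum : ∑ j, c j = 1 := by
    have : ∑ j, (1 - l j * x j) = (2:ℝ) := by
      rw [Finset.sum_sub_distrib, h]; simp
    rw [hc]; rw [← Finset.sum_div, this]; norm_num
  have hvS : ∀ j, v j ∈ S := by
    intro j
    constructor
    · intro i
      by_cases hij : i = j
      · subst hij; rcases hl1 i with h' | h' <;> simp [hv, h']
      · rcases hl1 i with h' | h' <;> simp [hv, hij, h']
    · have herase : ∏ i ∈ univ.erase j, l i = - l j := by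
        have hp := Finset.mul_prod_erase univ l (mem_univ j)
        have : l j * ∏ i ∈ univ.erase j, l i = -1 := by rw [hp, hl2]
        have h2 := congrArg (fun t => l j * t) this
        rw [← mul_assoc, hlsq j, one_mul] at h2
        linarith
      rw [← Finset.mul_prod_erase univ _ (mem_univ j)]
      have : ∏ i ∈ univ.erase j, v j i = ∏ i ∈ univ.erase j, l i := by
        apply Finset.prod_congr rfl
        intro i hi
        simp [hv, Finset.ne_of_mem_erase hi]
      rw [this, herase]
      simp [hv]
      nlinarith [hlsq j]
  have hxeq : univ.centerMass c v = x := by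
    rw [Finset.centerMass_eq_of_sum_1 _ _ hcsum]
    funext i
    rw [Finset.sum_apply]
    have hterm : ∀ j, (c j • v j) i = c j * l i - (if j = i then 2 * c i * l i else 0) := by
      intro j
      simp only [Pi.smul_apply, smul_eq_mul, hv]
      by_cases hij : i = j
      · subst hij; simp; ring
      · simp [hij, Ne.symm hij]
    simp_rw [hterm]
    rw [Finset.sum_sub_distrib, ← Finset.sum_mul, hcsum, Finset.sum_ite_eq']
    simp only [Finset.mem_univ, if_true, one_mul]
    rw [show c i = (1 - l i * x i) / 2 from rfl]
    linear_combination x i * hlsq i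
  have hxhull : x ∈ convexHull ℝ S := by
    rw [← hxeq]
    exact Finset.centerMass_mem_convexHull univ (fun i _ => hc0 i)
      (by rw [hcsum]; norm_num) (fun i _ => hvS i)
  -- not in interior
  have hnotint : x ∉ interior (convexHull ℝ S) := by
    intro hxi
    rw [mem_interior_iff_mem_nhds, Metric.mem_nhds_iff] at hxi
    obtain ⟨ε, hε, hball⟩ := hxi
    set t : ℝ := ε / (2 * (‖l‖ + 1)) with ht
    have hnl : (0:ℝ) ≤ ‖l‖ := norm_nonneg l
    have htpos : 0 < t := by positivity
    have hmem : x + t • l ∈ convexHull ℝ S := by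
      apply hball
      simp only [Metric.mem_ball, dist_eq_norm, add_sub_cancel_left]
      rw [norm_smul, Real.norm_eq_abs, abs_of_pos htpos]
      calc t * ‖l‖ ≤ t * (‖l‖ + 1) := by nlinarith
        _ = ε / 2 := by rw [ht]; field_simp
        _ < ε := by linarith
    have hle := hsub hmem
    simp only [Set.mem_setOf_eq, hf] at hle
    have : ∑ i, l i * (x + t • l) i = (n:ℝ) - 2 + t * n := by
      simp only [Pi.add_apply, Pi.smul_apply, smul_eq_mul, mul_add]
      rw [Finset.sum_add_distrib, h]
      congr 1
      have : ∀ i, l i * (t * l i) = t := by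
        intro i; rw [← mul_assoc, mul_comm (l i) t, mul_assoc, hlsq i, mul_one]
      simp_rw [this]
      simp [mul_comm]
    rw [this] at hle
    have hn0 : (0:ℝ) < n := by positivity
    nlinarith
  exact ⟨subset_closure hxhull, hnotint⟩
end

section
/- Let n ≥ 2, n−2 ≤ Δ ≤ n, and let λ ∈ {−1,+1}ⁿ with ∏λᵢ = −1. If x ∈ [−1,1]ⁿ satisfies ∑λᵢxᵢ > Δ, then s₁(x) = ∑λᵢxᵢ, where s₁(x) is the maximum of ∑λ'ᵢxᵢ over sign vectors λ' with ∏λ'ᵢ = −1; moreover, for any other odd sign vector λ' ≠ λ, ∑λ'ᵢxᵢ ≤ n−2. -/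
open Finset

theorem key_lemma (n : ℕ) (Δ : ℝ) (hΔ1 : (n:ℝ) - 2 ≤ Δ)
    (l : Fin n → ℝ) (hl : IsOddSign n l)
    (x : Fin n → ℝ) (hx : x ∈ Cube n) (h : Δ < ∑ i, l i * x i)
    (l' : Fin n → ℝ) (hl' : IsOddSign n l') (hne : l' ≠ l) :
    (∑ i, l' i * x i) ≤ (n:ℝ) - 2 := by
  classical
  set D := univ.filter (fun i => ¬ l' i = l i) with hD
  set E := univ.filter (fun i => l' i = l i) with hE
  have hcards : E.card + D.card = n := by
    simpa using Finset.card_filter_add_card_filter_not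
      (s := (univ : Finset (Fin n))) (p := fun i => l' i = l i)
  have hmul : ∀ i, l' i * l i = if l' i = l i then (1:ℝ) else -1 := by
    intro i
    rcases hl.1 i with h1 | h1 <;> rcases hl'.1 i with h2 | h2 <;>
      simp [h1, h2] <;> norm_num
  have hprod : ((-1:ℝ))^D.card = 1 := by
    have h1 : ∏ i, (l' i * l i) = 1 := by
      rw [Finset.prod_mul_distrib, hl'.2, hl.2]; norm_num
    have h2 : ∏ i, (l' i * l i) = (-1:ℝ)^D.card := by
      calc ∏ i, (l' i * l i) = ∏ i, (if l' i = l i then (1:ℝ) else -1) :=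
            Finset.prod_congr rfl (fun i _ => hmul i)
        _ = (∏ _i ∈ E, (1:ℝ)) * ∏ _i ∈ D, (-1:ℝ) := by
            rw [← Finset.prod_filter_mul_prod_filter_not univ (fun i => l' i = l i)]
            congr 1
            · exact Finset.prod_congr rfl (fun i hi => by
                simp only [hE, Finset.mem_filter] at hi; simp [hi.2])
            · exact Finset.prod_congr rfl (fun i hi => by
                simp only [hD, Finset.mem_filter] at hi; simp [hi.2])
        _ = (-1:ℝ)^D.card := by simp
    rw [← h2, h1]
  have hEven : Even D.card := by
    rcases Nat.even_or_odd D.card with he | ho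
    · exact he
    · rw [Odd.neg_one_pow ho] at hprod; norm_num at hprod
  have hDpos : 0 < D.card := by
    rw [Finset.card_pos]
    rw [Function.ne_iff] at hne
    obtain ⟨i, hi⟩ := hne
    exact ⟨i, by simp [hD, hi]⟩
  have hD2 : 2 ≤ D.card := by
    obtain ⟨k, hk⟩ := hEven; omega
  have hterm1 : ∀ i, l i * x i ≤ 1 := by
    intro i
    rcases hl.1 i with h1 | h1 <;> rw [h1] <;>
      [linarith [(hx i).2]; linarith [(hx i).1]]
  have hsplit : ∑ i, l i * x i = (∑ i ∈ E, l i * x i) + ∑ i ∈ D, l i * x i :=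
    (Finset.sum_filter_add_sum_filter_not univ _ _).symm
  have hneg : ∀ i ∈ D, l' i * x i = -(l i * x i) := by
    intro i hi
    simp only [hD, Finset.mem_filter] at hi
    rcases hl.1 i with h1 | h1 <;> rcases hl'.1 i with h2 | h2 <;>
      simp_all <;> ring
  have hsplit' : ∑ i, l' i * x i = (∑ i ∈ E, l i * x i) - ∑ i ∈ D, l i * x i := by
    rw [← Finset.sum_filter_add_sum_filter_not univ (fun i => l' i = l i)
      (fun i => l' i * x i)]
    have e1 : ∑ i ∈ E, l' i * x i = ∑ i ∈ E, l i * x i :=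
      Finset.sum_congr rfl (fun i hi => by
        simp only [hE, Finset.mem_filter] at hi; rw [hi.2])
    have e2 : ∑ i ∈ D, l' i * x i = -∑ i ∈ D, l i * x i := by
      rw [Finset.sum_congr rfl hneg, Finset.sum_neg_distrib]
    rw [e1, e2]; ring
  have hE_le : (∑ i ∈ E, l i * x i) ≤ (E.card : ℝ) := by
    calc (∑ i ∈ E, l i * x i) ≤ ∑ _i ∈ E, (1:ℝ) :=
          Finset.sum_le_sum (fun i _ => hterm1 i)
      _ = E.card := by simp
  have hEcard : (E.card : ℝ) + (D.card : ℝ) = n := by exact_mod_cast hcards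
  have hD2' : (2:ℝ) ≤ (D.card : ℝ) := by exact_mod_cast hD2
  linarith [hsplit, hsplit', hE_le]

theorem stmt8 (n : ℕ) (hn : 2 ≤ n) (Δ : ℝ) (hΔ1 : (n:ℝ) - 2 ≤ Δ) (hΔ2 : Δ ≤ n)
    (l : Fin n → ℝ) (hl : IsOddSign n l)
    (x : Fin n → ℝ) (hx : x ∈ Cube n) (h : Δ < ∑ i, l i * x i) :
    s1 n x = (∑ i, l i * x i) ∧
    (∀ l', IsOddSign n l' → l' ≠ l → (∑ i, l' i * x i) ≤ (n:ℝ) - 2) := by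
  classical
  have key : ∀ l', IsOddSign n l' → l' ≠ l → (∑ i, l' i * x i) ≤ (n:ℝ) - 2 :=
    fun l' hl' hne => key_lemma n Δ hΔ1 l hl x hx h l' hl' hne
  refine ⟨?_, key⟩
  apply IsGreatest.csSup_eq
  refine ⟨⟨l, hl, rfl⟩, ?_⟩
  rintro y ⟨l', hl', rfl⟩
  by_cases hne : l' = l
  · subst hne; exact le_refl _
  · have := key l' hl' hne; linarith
end

section
/- Define N(Δ) = {x ∈ [−1,1]ⁿ : ∑λᵢxᵢ ≤ Δ for all sign vectors λ ∈ {−1,+1}ⁿ with ∏λᵢ = −1}, for n−2 ≤ Δ ≤ n. Then N(Δ) = {x ∈ [−1,1]ⁿ : s₁(x) ≤ Δ}, N(Δ) is a convex compact set, N(n) = [−1,1]ⁿ, and N(n−2) equals the convex hull of the even vertices of [−1,1]ⁿ. -/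
open Finset

lemma oddSign_finite (n : ℕ) : {l : Fin n → ℝ | IsOddSign n l}.Finite := by
  apply Set.Finite.subset (Set.Finite.pi (fun i : Fin n => (Set.finite_singleton (1:ℝ)).insert (-1)))
  intro l hl
  simp only [Set.mem_pi, Set.mem_univ, forall_true_left, Set.mem_insert_iff, Set.mem_singleton_iff]
  intro i
  rcases hl.1 i with h | h <;> simp [h]

lemma oddSign_exists (n : ℕ) (hn : 2 ≤ n) : ∃ l, IsOddSign n l := by
  have h0 : (0 : ℕ) < n := by omega
  refine ⟨fun i => if i = ⟨0, h0⟩ then -1 else 1, fun i => ?_, ?_⟩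
  · by_cases h : i = ⟨0, h0⟩ <;> simp [h]
  · rw [Finset.prod_ite_eq' univ (⟨0, h0⟩ : Fin n) (fun _ => (-1:ℝ))]
    simp

lemma npoly_eq_s1 (n : ℕ) (hn : 2 ≤ n) (Δ : ℝ) :
    NPoly n Δ = {x | x ∈ Cube n ∧ s1 n x ≤ Δ} := by
  ext x
  obtain ⟨l0, hl0⟩ := oddSign_exists n hn
  constructor
  · rintro ⟨hc, h⟩
    have hne : ((fun l => ∑ i, l i * x i) '' {l | IsOddSign n l}).Nonempty :=
      ⟨∑ i, l0 i * x i, ⟨l0, hl0, rfl⟩⟩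
    refine ⟨hc, csSup_le hne ?_⟩
    rintro y ⟨l, hl, rfl⟩
    exact h l hl
  · rintro ⟨hc, h⟩
    refine ⟨hc, fun l hl => ?_⟩
    have hmem : (∑ i, l i * x i) ∈ ((fun l => ∑ i, l i * x i) '' {l | IsOddSign n l}) :=
      ⟨l, hl, rfl⟩
    refine le_trans (le_csSup ?_ hmem) h
    exact ((oddSign_finite n).image _).bddAbove

lemma npoly_convex (n : ℕ) (Δ : ℝ) : Convex ℝ (NPoly n Δ) := by
  rintro x ⟨hxc, hx⟩ y ⟨hyc, hy⟩ a b ha hb hab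
  constructor
  · intro i
    exact convex_Icc (-1:ℝ) 1 (hxc i) (hyc i) ha hb hab
  · intro l hl
    have key : ∑ i, l i * (a • x + b • y) i
        = a * (∑ i, l i * x i) + b * (∑ i, l i * y i) := by
      simp only [Pi.add_apply, Pi.smul_apply, smul_eq_mul, Finset.mul_sum]
      rw [← Finset.sum_add_distrib]
      exact Finset.sum_congr rfl (fun i _ => by ring)
    rw [key]
    calc a * (∑ i, l i * x i) + b * (∑ i, l i * y i) ≤ a * Δ + b * Δ := by
          gcongr <;> [exact hx l hl; exact hy l hl]
      _ = Δ := by rw [← add_mul, hab, one_mul]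

lemma cube_eq (n : ℕ) : Cube n = Set.pi Set.univ (fun _ : Fin n => Set.Icc (-1:ℝ) 1) := by
  ext x; simp [Cube, Set.mem_pi, Set.mem_Icc, Pi.le_def, forall_and]

lemma npoly_compact (n : ℕ) (Δ : ℝ) : IsCompact (NPoly n Δ) := by
  have hcube : IsCompact (Cube n) := by
    rw [cube_eq]; exact isCompact_univ_pi (fun i => isCompact_Icc)
  apply hcube.of_isClosed_subset ?_ (fun x hx => hx.1)
  have : NPoly n Δ = Cube n ∩ ⋂ (l : Fin n → ℝ), ⋂ (_ : IsOddSign n l), {x | ∑ i, l i * x i ≤ Δ} := by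
    ext x
    simp only [NPoly, Set.mem_setOf_eq, Set.mem_inter_iff, Set.mem_iInter]
  rw [this]
  apply IsClosed.inter
  · rw [cube_eq]
    exact isClosed_set_pi (fun i _ => isClosed_Icc)
  · apply isClosed_iInter; intro l; apply isClosed_iInter; intro _
    exact isClosed_le (by continuity) continuous_const

lemma npoly_top (n : ℕ) : NPoly n n = Cube n := by
  ext x
  refine ⟨fun h => h.1, fun hc => ⟨hc, fun l hl => ?_⟩⟩
  calc ∑ i, l i * x i ≤ ∑ _i : Fin n, (1:ℝ) := by
        apply Finset.sum_le_sum
        intro i _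
        rcases hl.1 i with h | h <;> rcases (hc i) with ⟨h1, h2⟩ <;> rw [h] <;> nlinarith
    _ = n := by simp

open Classical in
noncomputable def fracset (n : ℕ) (x : Fin n → ℝ) : Finset (Fin n) :=
  Finset.univ.filter (fun i => x i ≠ 1 ∧ x i ≠ -1)

lemma mem_fracset {n : ℕ} {x : Fin n → ℝ} {i : Fin n} :
    i ∈ fracset n x ↔ x i ≠ 1 ∧ x i ≠ -1 := by
  simp [fracset]

lemma frac_abs_lt {n : ℕ} {x : Fin n → ℝ} (hx : x ∈ Cube n) {i : Fin n}
    (h1 : x i ≠ 1) (h2 : x i ≠ -1) : |x i| < 1 := by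
  rcases hx i with ⟨ha, hb⟩
  rw [abs_lt]
  exact ⟨lt_of_le_of_ne ha (Ne.symm h2), lt_of_le_of_ne hb h1⟩

lemma abs_lt_mem_fracset {n : ℕ} {x : Fin n → ℝ} {i : Fin n} (h : |x i| < 1) :
    i ∈ fracset n x := by
  rw [mem_fracset]
  rcases abs_lt.1 h with ⟨h1, h2⟩
  exact ⟨ne_of_lt h2, ne_of_gt h1⟩

lemma prod_pm {n : ℕ} {s : Finset (Fin n)} {f : Fin n → ℝ}
    (h : ∀ i ∈ s, f i = 1 ∨ f i = -1) :
    (∏ i ∈ s, f i) = 1 ∨ (∏ i ∈ s, f i) = -1 :=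
  Finset.prod_induction f (fun z => z = 1 ∨ z = -1)
    (by rintro u v (rfl|rfl) (rfl|rfl) <;> norm_num) (Or.inl rfl) h

lemma sum_split {n : ℕ} {j k : Fin n} (hjk : j ≠ k) (f : Fin n → ℝ) :
    ∑ i, f i = f j + f k + ∑ i ∈ (univ.erase j).erase k, f i := by
  have hkj : k ∈ univ.erase j := Finset.mem_erase.mpr ⟨Ne.symm hjk, mem_univ k⟩
  rw [← Finset.add_sum_erase _ f (mem_univ j), ← Finset.add_sum_erase _ f hkj]
  ring

lemma prod_split {n : ℕ} {j k : Fin n} (hjk : j ≠ k) (f : Fin n → ℝ) :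
    ∏ i, f i = f j * f k * ∏ i ∈ (univ.erase j).erase k, f i := by
  have hkj : k ∈ univ.erase j := Finset.mem_erase.mpr ⟨Ne.symm hjk, mem_univ k⟩
  rw [← Finset.mul_prod_erase _ f (mem_univ j), ← Finset.mul_prod_erase _ f hkj]
  ring

lemma dichotomy {n : ℕ} (hn : 2 ≤ n) {x : Fin n → ℝ} (hx : x ∈ NPoly n ((n:ℝ)-2))
    {j k : Fin n} (hjk : j ≠ k) (hj : |x j| < 1) (hk : |x k| < 1)
    {l m : Fin n → ℝ} (hl : IsOddSign n l) (hm : IsOddSign n m)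
    (htl : ∑ i, l i * x i = (n:ℝ)-2) (htm : ∑ i, m i * x i = (n:ℝ)-2)
    (hop : l j * l k = -(m j * m k)) : False := by
  set s := (univ.erase j).erase k with hs
  have hkj : k ∈ univ.erase j := Finset.mem_erase.mpr ⟨Ne.symm hjk, mem_univ k⟩
  have h1 : (univ.erase j).card = n - 1 := by
    rw [Finset.card_erase_of_mem (mem_univ j), Finset.card_univ, Fintype.card_fin]
  have hcard : s.card = n - 2 := by
    rw [hs, Finset.card_erase_of_mem hkj, h1]; omega
  have hcardR : (s.card : ℝ) = (n:ℝ) - 2 := by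
    rw [hcard, Nat.cast_sub hn]; norm_num
  have hj' := abs_lt.1 hj
  have hk' := abs_lt.1 hk
  -- A
  have hsum2 : ∑ i, (l i + m i) * x i = 2*(n:ℝ) - 4 := by
    have : ∑ i, (l i + m i) * x i = (∑ i, l i * x i) + ∑ i, m i * x i := by
      rw [← Finset.sum_add_distrib]
      exact Finset.sum_congr rfl (fun i _ => by ring)
    rw [this, htl, htm]; ring
  have hB : (l j + m j)*x j + (l k + m k)*x k < 2 := by
    rcases hl.1 j with h1|h1 <;> rcases hl.1 k with h2|h2 <;>
      rcases hm.1 j with h3|h3 <;> rcases hm.1 k with h4|h4 <;>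
      rw [h1, h2, h3, h4] at hop ⊢ <;> norm_num at hop <;> linarith
  have hA : ∑ i ∈ s, (l i + m i) * x i > 2*(s.card:ℝ) - 2 := by
    have := sum_split hjk (fun i => (l i + m i) * x i)
    rw [hcardR]
    linarith [hsum2, hB, this]
  -- C
  have hub : ∀ i, (l i + m i) * x i ≤ 2 := by
    intro i
    rcases hl.1 i with h1|h1 <;> rcases hm.1 i with h2|h2 <;> rw [h1, h2] <;>
      rcases hx.1 i with ⟨ha, hb⟩ <;> nlinarith
  have hC : ∀ i ∈ s, l i = m i := by
    by_contra hcon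
    push_neg at hcon
    obtain ⟨i₀, hi₀s, hne⟩ := hcon
    have hterm0 : l i₀ + m i₀ = 0 := by
      rcases hl.1 i₀ with h1|h1 <;> rcases hm.1 i₀ with h2|h2 <;> rw [h1, h2] <;>
        rw [h1, h2] at hne <;> norm_num at hne <;> norm_num
    have hsplit : ∑ i ∈ s, (l i + m i) * x i
        = (l i₀ + m i₀) * x i₀ + ∑ i ∈ s.erase i₀, (l i + m i) * x i :=
      (Finset.add_sum_erase _ _ hi₀s).symm
    have hbound : ∑ i ∈ s.erase i₀, (l i + m i) * x i ≤ ((s.erase i₀).card : ℝ) * 2 := by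
      calc ∑ i ∈ s.erase i₀, (l i + m i) * x i ≤ (s.erase i₀).card • (2:ℝ) :=
            Finset.sum_le_card_nsmul _ _ 2 (fun i _ => hub i)
        _ = ((s.erase i₀).card : ℝ) * 2 := by rw [nsmul_eq_mul]
    have hce : ((s.erase i₀).card : ℝ) = (s.card : ℝ) - 1 := by
      rw [Finset.card_erase_of_mem hi₀s, Nat.cast_sub (by
        exact Finset.card_pos.mpr ⟨i₀, hi₀s⟩)]
      norm_num
    rw [hterm0, zero_mul, zero_add] at hsplit
    rw [hce] at hbound
    linarith [hA, hsplit ▸ hbound]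
  -- D
  have hPl : l j * l k * ∏ i ∈ s, l i = -1 := by
    have := prod_split hjk l
    rw [← this]; exact hl.2
  have hPm : m j * m k * ∏ i ∈ s, m i = -1 := by
    have := prod_split hjk m
    rw [← this]; exact hm.2
  have hPP : ∏ i ∈ s, l i = ∏ i ∈ s, m i := Finset.prod_congr rfl hC
  rw [hop, hPP] at hPl
  nlinarith [hPl, hPm]

lemma all_vertex_even {n : ℕ} (hn : 2 ≤ n) {x : Fin n → ℝ} (hx : x ∈ NPoly n ((n:ℝ)-2))
    (hv : ∀ i, x i = 1 ∨ x i = -1) : (∏ i, x i) = 1 := by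
  rcases prod_pm (fun i _ => hv i) with h | h
  · exact h
  · exfalso
    have hle := hx.2 x ⟨hv, h⟩
    have : ∑ i, x i * x i = (n:ℝ) := by
      rw [Finset.sum_congr rfl (fun i _ => by rcases hv i with h'|h' <;> rw [h'] <;> norm_num :
        ∀ i ∈ univ, x i * x i = 1)]
      simp
    linarith

lemma not_single_frac {n : ℕ} (hn : 2 ≤ n) {x : Fin n → ℝ} (hx : x ∈ NPoly n ((n:ℝ)-2))
    {j : Fin n} (hj : |x j| < 1) (ho : ∀ i, i ≠ j → x i = 1 ∨ x i = -1) : False := by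
  classical
  set Q := ∏ i ∈ univ.erase j, x i with hQdef
  have hQ : Q = 1 ∨ Q = -1 := prod_pm (fun i hi => ho i (Finset.mem_erase.mp hi).1)
  set l := Function.update x j (-Q) with hldef
  have hlj : l j = -Q := Function.update_self j (-Q) x
  have hlo : ∀ i, i ≠ j → l i = x i := fun i hi => Function.update_of_ne hi (-Q) x
  have hlv : ∀ i, l i = 1 ∨ l i = -1 := by
    intro i
    by_cases h : i = j
    · subst h; rw [hlj]; rcases hQ with h|h <;> rw [h] <;> norm_num
    · rw [hlo i h]; exact ho i h
  have hlprod : ∏ i, l i = -1 := by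
    rw [← Finset.mul_prod_erase univ l (mem_univ j), hlj,
      Finset.prod_congr rfl (fun i hi => hlo i (Finset.mem_erase.mp hi).1), ← hQdef]
    rcases hQ with h|h <;> rw [h] <;> norm_num
  have hsum := hx.2 l ⟨hlv, hlprod⟩
  have hrest : ∑ i ∈ univ.erase j, l i * x i = (n:ℝ) - 1 := by
    have hone : ∀ i ∈ univ.erase j, l i * x i = 1 := by
      intro i hi
      have hij := (Finset.mem_erase.mp hi).1
      rw [hlo i hij]
      rcases ho i hij with h|h <;> rw [h] <;> norm_num
    rw [Finset.sum_congr rfl hone, Finset.sum_const, Finset.card_erase_of_mem (mem_univ j),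
      Finset.card_univ, Fintype.card_fin, nsmul_eq_mul, Nat.cast_sub (by omega : 1 ≤ n)]
    norm_num
  have hsplit : ∑ i, l i * x i = l j * x j + ∑ i ∈ univ.erase j, l i * x i :=
    (Finset.add_sum_erase _ _ (mem_univ j)).symm
  rw [hsplit, hrest, hlj] at hsum
  have hj' := abs_lt.1 hj
  rcases hQ with h|h <;> rw [h] at hsum <;> linarith

lemma even_vertex_mem {n : ℕ} (hn : 2 ≤ n) {v : Fin n → ℝ}
    (hv : ∀ i, v i = 1 ∨ v i = -1) (hp : ∏ i, v i = 1) :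
    v ∈ NPoly n ((n:ℝ)-2) := by
  refine ⟨fun i => ?_, fun l hl => ?_⟩
  · rcases hv i with h|h <;> rw [h] <;> constructor <;> norm_num
  · have htv : ∀ i, l i * v i = 1 ∨ l i * v i = -1 := by
      intro i
      rcases hl.1 i with h|h <;> rcases hv i with h'|h' <;> rw [h, h'] <;> norm_num
    have htp : ∏ i, l i * v i = -1 := by
      rw [Finset.prod_mul_distrib, hl.2, hp]; norm_num
    obtain ⟨j, hjt⟩ : ∃ j, l j * v j = -1 := by
      by_contra hcon
      push_neg at hcon
      have hall : ∀ i ∈ univ, l i * v i = 1 :=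
        fun i _ => (htv i).resolve_right (hcon i)
      rw [Finset.prod_congr rfl hall, Finset.prod_const_one] at htp
      norm_num at htp
    have hsplit : ∑ i, l i * v i = l j * v j + ∑ i ∈ univ.erase j, l i * v i :=
      (Finset.add_sum_erase _ _ (mem_univ j)).symm
    have hbound : ∑ i ∈ univ.erase j, l i * v i ≤ ((univ.erase j).card : ℝ) * 1 := by
      calc ∑ i ∈ univ.erase j, l i * v i ≤ (univ.erase j).card • (1:ℝ) :=
            Finset.sum_le_card_nsmul _ _ 1 (fun i _ => by rcases htv i with h|h <;> rw [h] <;> norm_num)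
        _ = ((univ.erase j).card : ℝ) * 1 := by rw [nsmul_eq_mul]
    have hce : ((univ.erase j).card : ℝ) = (n:ℝ) - 1 := by
      rw [Finset.card_erase_of_mem (mem_univ j), Finset.card_univ, Fintype.card_fin,
        Nat.cast_sub (by omega : 1 ≤ n)]
      norm_num
    rw [hsplit, hjt]
    rw [hce] at hbound
    linarith

lemma segment_mem {E : Type*} [AddCommGroup E] [Module ℝ E] {s : Set E} {x d : E} {t₁ t₂ : ℝ}
    (h₁ : 0 < t₁) (h₂ : 0 < t₂) (hy : x + t₁ • d ∈ convexHull ℝ s)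
    (hz : x - t₂ • d ∈ convexHull ℝ s) : x ∈ convexHull ℝ s := by
  have hne : t₁ + t₂ ≠ 0 := by positivity
  have key : (t₂/(t₁+t₂)) • (x + t₁ • d) + (t₁/(t₁+t₂)) • (x - t₂ • d) = x := by
    match_scalars <;> field_simp <;> ring
  have hab : t₂/(t₁+t₂) + t₁/(t₁+t₂) = 1 := by field_simp; ring
  have := (convex_convexHull ℝ s) hy hz
    (le_of_lt (by positivity)) (le_of_lt (by positivity)) hab
  rw [key] at this
  exact this

lemma step {n : ℕ} (hn : 2 ≤ n) {x : Fin n → ℝ} (hx : x ∈ NPoly n ((n:ℝ)-2))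
    {j k : Fin n} (hjk : j ≠ k) (hj : |x j| < 1) (hk : |x k| < 1)
    {c a : ℝ} (hc : c = 1 ∨ c = -1) (ha : a = 1 ∨ a = -1)
    {d : Fin n → ℝ}
    (hd : d = fun i => (if i = j then a else 0) + (if i = k then a*c else 0))
    (H1 : ∀ l, IsOddSign n l → (∑ i, l i * x i) = (n:ℝ) - 2 → l k ≠ c * l j) :
    ∃ t : ℝ, 0 < t ∧ ∃ y : Fin n → ℝ, y = x + t • d ∧ y ∈ NPoly n ((n:ℝ)-2) ∧
      (∀ l : Fin n → ℝ, ∑ i, l i * y i = (∑ i, l i * x i) + t * (l j * a + l k * (a*c))) ∧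
      fracset n y ⊆ fracset n x ∧
      ((j ∉ fracset n y ∨ k ∉ fracset n y) ∨
       (|y j| < 1 ∧ |y k| < 1 ∧
        ∃ l, IsOddSign n l ∧ (∑ i, l i * y i) = (n:ℝ)-2 ∧ l j * l k = c)) := by
  classical
  have haa : a * a = 1 := by rcases ha with h|h <;> rw [h] <;> norm_num
  have hcc : c * c = 1 := by rcases hc with h|h <;> rw [h] <;> norm_num
  have hdj : d j = a := by rw [hd]; simp [hjk]
  have hdk : d k = a * c := by rw [hd]; simp [Ne.symm hjk]
  have hdo : ∀ i, i ≠ j → i ≠ k → d i = 0 := by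
    intro i h1 h2; rw [hd]; simp [h1, h2]
  have habs : ∀ u : ℝ, |a * u| = |u| := by
    intro u; rw [abs_mul]; rcases ha with h|h <;> rw [h] <;> norm_num
  have hacpm : a * c = 1 ∨ a * c = -1 := by
    rcases ha with h|h <;> rcases hc with h'|h' <;> rw [h, h'] <;> norm_num
  have hjf : x j ≠ 1 ∧ x j ≠ -1 := by
    rcases abs_lt.1 hj with ⟨h1, h2⟩; exact ⟨ne_of_lt h2, ne_of_gt h1⟩
  have hkf : x k ≠ 1 ∧ x k ≠ -1 := by
    rcases abs_lt.1 hk with ⟨h1, h2⟩; exact ⟨ne_of_lt h2, ne_of_gt h1⟩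
  -- the coordinate hit time
  set t₀ : ℝ := min (1 - a * x j) (1 - (a*c) * x k) with ht₀
  have hax : a * x j < 1 := by
    rcases ha with h|h <;> rw [h] <;> rcases abs_lt.1 hj with ⟨h1, h2⟩ <;> linarith
  have hacx : (a*c) * x k < 1 := by
    rcases hacpm with h|h <;> rw [h] <;> rcases abs_lt.1 hk with ⟨h1, h2⟩ <;> linarith
  have ht₀pos : 0 < t₀ := lt_min (by linarith) (by linarith)
  have ht₀j : t₀ ≤ 1 - a * x j := min_le_left _ _
  have ht₀k : t₀ ≤ 1 - (a*c) * x k := min_le_right _ _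
  -- generic facts about x + t • d
  have hyval : ∀ (t : ℝ) (i : Fin n), (x + t • d) i = x i + t * d i := by
    intro t i; simp
  have hsum_d : ∀ l : Fin n → ℝ, ∑ i, l i * d i = l j * a + l k * (a*c) := by
    intro l
    rw [hd]
    simp only [mul_add, Finset.sum_add_distrib, mul_ite, mul_zero,
      Finset.sum_ite_eq', Finset.mem_univ, if_true]
  have hsum_y : ∀ (t : ℝ) (l : Fin n → ℝ),
      ∑ i, l i * (x + t • d) i = (∑ i, l i * x i) + t * (l j * a + l k * (a*c)) := by
    intro t l
    have : ∑ i, l i * (x + t • d) i = ∑ i, (l i * x i + t * (l i * d i)) := by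
      refine Finset.sum_congr rfl (fun i _ => ?_)
      rw [hyval]; ring
    rw [this, Finset.sum_add_distrib, ← Finset.mul_sum, hsum_d]
  have hcube : ∀ t : ℝ, 0 < t → t ≤ t₀ → (x + t • d) ∈ Cube n := by
    intro t ht ht0 i
    by_cases hij : i = j
    · subst hij
      rw [hyval, hdj]
      have h1 : a * (x i + t * a) = a * x i + t := by
        rw [mul_add]; rw [mul_comm t a, ← mul_assoc, haa]; ring
      have h2 : a * x i + t ≤ 1 := by
        have := ht₀j; linarith
      have h3 : -1 < a * x i + t := by
        rcases ha with h|h <;> rw [h] at h1 ⊢ <;> rcases abs_lt.1 hj with ha1 <;>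
          rcases abs_lt.1 hj with ⟨hb1, hb2⟩ <;> linarith
      rcases ha with h|h <;> rw [h] at h1 h2 h3 ⊢ <;> constructor <;> nlinarith
    · by_cases hik : i = k
      · subst hik
        rw [hyval, hdk]
        have hacc : (a*c) * (a*c) = 1 := by
          rcases hacpm with h|h <;> rw [h] <;> norm_num
        have h2 : (a*c) * x i + t ≤ 1 := by
          have := ht₀k; linarith
        have h3 : -1 < (a*c) * x i + t := by
          rcases hacpm with h|h <;> rw [h] <;> rcases abs_lt.1 hk with ⟨hb1, hb2⟩ <;> linarith
        rcases hacpm with h|h <;> rw [h] at h2 h3 ⊢ <;> constructor <;> nlinarith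
      · rw [hyval, hdo i hij hik, mul_zero, add_zero]
        exact hx.1 i
  have hsubset : ∀ t : ℝ, fracset n (x + t • d) ⊆ fracset n x := by
    intro t i hi
    by_cases hij : i = j
    · subst hij; rw [mem_fracset]; exact hjf
    · by_cases hik : i = k
      · subst hik; rw [mem_fracset]; exact hkf
      · rw [mem_fracset] at hi ⊢
        rwa [hyval, hdo i hij hik, mul_zero, add_zero] at hi
  -- case split on whether t₀ is feasible
  by_cases hgood : ∀ l, IsOddSign n l → ∑ i, l i * (x + t₀ • d) i ≤ (n:ℝ)-2
  · refine ⟨t₀, ht₀pos, x + t₀ • d, rfl, ⟨hcube t₀ ht₀pos le_rfl, hgood⟩,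
      fun l => hsum_y t₀ l, hsubset t₀, Or.inl ?_⟩
    rcases min_cases (1 - a * x j) (1 - (a*c) * x k) with ⟨he, _⟩ | ⟨he, _⟩
    · left
      have : (x + t₀ • d) j = a := by
        rw [hyval, hdj, ht₀, he]
        linear_combination (-(x j)) * haa
      rw [mem_fracset, this]
      rcases ha with h|h <;> rw [h] <;> simp
    · right
      have hacc : (a*c) * (a*c) = 1 := by
        rcases hacpm with h|h <;> rw [h] <;> norm_num
      have : (x + t₀ • d) k = a*c := by
        rw [hyval, hdk, ht₀, he]
        linear_combination (-(x k)) * hacc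
      rw [mem_fracset, this]
      rcases hacpm with h|h <;> rw [h] <;> simp
  · push_neg at hgood
    obtain ⟨l₁, hl₁, hl₁v⟩ := hgood
    -- l₁ must be an increasing constraint
    have hcoeff : ∀ l : Fin n → ℝ, (∀ i, l i = 1 ∨ l i = -1) →
        ¬ (l j = a ∧ l k = a*c) → l j * a + l k * (a*c) ≤ 0 := by
      intro l hv hno
      rcases hv j with h1|h1 <;> rcases hv k with h2|h2 <;>
        rcases ha with h3|h3 <;> rcases hc with h4|h4 <;>
        rw [h1, h2] at hno ⊢ <;> rw [h3, h4] at hno ⊢ <;> norm_num at hno <;> norm_num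
    have hl₁jk : l₁ j = a ∧ l₁ k = a*c := by
      by_contra hno
      have hc0 := hcoeff l₁ hl₁.1 hno
      have := hsum_y t₀ l₁
      have hle := hx.2 l₁ hl₁
      nlinarith [ht₀pos]
    -- the tight-time
    set Tf : Finset (Fin n → ℝ) :=
      (oddSign_finite n).toFinset.filter (fun l => l j = a ∧ l k = a*c) with hTf
    have hmemTf : ∀ l, l ∈ Tf ↔ IsOddSign n l ∧ (l j = a ∧ l k = a*c) := by
      intro l
      rw [hTf, Finset.mem_filter, Set.Finite.mem_toFinset]
      rfl
    have hTne : Tf.Nonempty := ⟨l₁, (hmemTf l₁).mpr ⟨hl₁, hl₁jk⟩⟩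
    set t' : ℝ := Tf.inf' hTne (fun l => ((n:ℝ) - 2 - ∑ i, l i * x i)/2) with ht'
    have ht'pos : 0 < t' := by
      rw [ht', Finset.lt_inf'_iff]
      intro l hl
      rw [hmemTf] at hl
      have hle := hx.2 l hl.1
      have hne : ∑ i, l i * x i ≠ (n:ℝ) - 2 := by
        intro heq
        exact H1 l hl.1 heq (by rw [hl.2.2, hl.2.1]; ring)
      have : ∑ i, l i * x i < (n:ℝ) - 2 := lt_of_le_of_ne hle hne
      linarith
    have hcoeff2 : l₁ j * a + l₁ k * (a*c) = 2 := by
      rw [hl₁jk.1, hl₁jk.2]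
      have hacc : (a*c) * (a*c) = 1 := by
        rcases hacpm with h|h <;> rw [h] <;> norm_num
      rw [haa, hacc]; norm_num
    have ht'lt : t' < t₀ := by
      have h1 : t' ≤ ((n:ℝ) - 2 - ∑ i, l₁ i * x i)/2 :=
        Finset.inf'_le _ ((hmemTf l₁).mpr ⟨hl₁, hl₁jk⟩)
      have h2 := hsum_y t₀ l₁
      rw [hcoeff2] at h2
      linarith
    refine ⟨t', ht'pos, x + t' • d, rfl, ⟨hcube t' ht'pos (le_of_lt ht'lt), ?_⟩,
      fun l => hsum_y t' l, hsubset t', Or.inr ?_⟩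
    · -- all constraints hold at t'
      intro l hl
      rw [hsum_y]
      by_cases hm : l j = a ∧ l k = a*c
      · have hco : l j * a + l k * (a*c) = 2 := by
          rw [hm.1, hm.2]
          have hacc : (a*c) * (a*c) = 1 := by
            rcases hacpm with h|h <;> rw [h] <;> norm_num
          rw [haa, hacc]; norm_num
        have hle : t' ≤ ((n:ℝ) - 2 - ∑ i, l i * x i)/2 :=
          Finset.inf'_le _ ((hmemTf l).mpr ⟨hl, hm⟩)
        rw [hco]
        linarith
      · have hc0 := hcoeff l hl.1 hm
        have hle := hx.2 l hl
        have hneg : t' * (l j * a + l k * (a*c)) ≤ 0 :=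
          mul_nonpos_iff.mpr (Or.inl ⟨ht'pos.le, hc0⟩)
        linarith
    · -- fractional at j and k, and a tight constraint with product c
      have hyj : |(x + t' • d) j| < 1 := by
        have h1 : -1 < a * x j := by
          rcases ha with h|h <;> rw [h] <;> rcases abs_lt.1 hj with ⟨hb1, hb2⟩ <;> linarith
        rw [hyval, hdj, ← habs (x j + t' * a)]
        have h2 : a * (x j + t' * a) = a * x j + t' := by
          rw [mul_add, mul_comm t' a, ← mul_assoc, haa]; ring
        rw [h2, abs_lt]
        exact ⟨by linarith, by linarith [ht'lt, ht₀j]⟩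
      have hyk : |(x + t' • d) k| < 1 := by
        have hacc : (a*c) * (a*c) = 1 := by
          rcases hacpm with h|h <;> rw [h] <;> norm_num
        have habs' : |(a*c) * ((x + t' • d) k)| = |(x + t' • d) k| := by
          rw [abs_mul]
          rcases hacpm with h|h <;> rw [h] <;> norm_num
        rw [← habs']
        rw [hyval, hdk]
        have : (a*c) * (x k + t' * (a*c)) = (a*c) * x k + t' := by
          rw [mul_add, mul_comm t' (a*c), ← mul_assoc, hacc]; ring
        rw [this, abs_lt]
        constructor
        · have : -1 < (a*c) * x k := by
            rcases hacpm with h|h <;> rw [h] <;> rcases abs_lt.1 hk with ⟨h1, h2⟩ <;> linarith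
          linarith
        · linarith [ht'lt, ht₀k]
      obtain ⟨lm, hlmT, hlmeq⟩ := Finset.exists_mem_eq_inf' hTne (fun l => ((n:ℝ) - 2 - ∑ i, l i * x i)/2)
      rw [hmemTf] at hlmT
      refine ⟨hyj, hyk, lm, hlmT.1, ?_, ?_⟩
      · rw [hsum_y]
        have hco : lm j * a + lm k * (a*c) = 2 := by
          rw [hlmT.2.1, hlmT.2.2]
          have hacc : (a*c) * (a*c) = 1 := by
            rcases hacpm with h|h <;> rw [h] <;> norm_num
          rw [haa, hacc]; norm_num
        have heq : t' = ((n:ℝ) - 2 - ∑ i, lm i * x i)/2 := by rw [ht']; exact hlmeq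
        rw [hco, heq]
        ring
      · rw [hlmT.2.1, hlmT.2.2]
        linear_combination c * haa

lemma tight_case {n : ℕ} (hn : 2 ≤ n) {x : Fin n → ℝ} (hx : x ∈ NPoly n ((n:ℝ)-2))
    {j k : Fin n} (hjk : j ≠ k) (hj : |x j| < 1) (hk : |x k| < 1)
    {l₀ : Fin n → ℝ} (hl₀ : IsOddSign n l₀) (ht₀ : ∑ i, l₀ i * x i = (n:ℝ)-2)
    {S : Set (Fin n → ℝ)}
    (IH : ∀ w, w ∈ NPoly n ((n:ℝ)-2) → (fracset n w).card < (fracset n x).card →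
      w ∈ convexHull ℝ S) :
    x ∈ convexHull ℝ S := by
  classical
  set c : ℝ := -(l₀ j * l₀ k) with hcdef
  have hl₀j := hl₀.1 j
  have hl₀k := hl₀.1 k
  have hc : c = 1 ∨ c = -1 := by
    rw [hcdef]; rcases hl₀j with h|h <;> rcases hl₀k with h'|h' <;> rw [h, h'] <;> norm_num
  have hjmem : j ∈ fracset n x := abs_lt_mem_fracset hj
  have hkmem : k ∈ fracset n x := abs_lt_mem_fracset hk
  have H1 : ∀ l, IsOddSign n l → (∑ i, l i * x i) = (n:ℝ)-2 → l k ≠ c * l j := by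
    intro l hl ht heq
    have hjj : l j * l j = 1 := by rcases hl.1 j with h|h <;> rw [h] <;> norm_num
    have hgoal : l j * l k = c := by rw [heq]; linear_combination c * hjj
    exact dichotomy hn hx hjk hj hk hl hl₀ ht ht₀ (hgoal.trans hcdef)
  have hperp : ∀ a : ℝ, l₀ j * a + l₀ k * (a*c) = 0 := by
    intro a
    rw [hcdef]
    rcases hl₀j with h|h <;> rcases hl₀k with h'|h' <;> rw [h, h'] <;> ring
  set d₁ : Fin n → ℝ := fun i => (if i = j then (1:ℝ) else 0) + (if i = k then 1*c else 0)
    with hd₁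
  have hd₂ : (-d₁) = fun i => (if i = j then (-1:ℝ) else 0) + (if i = k then (-1)*c else 0) := by
    funext i
    have hv : d₁ i = (if i = j then (1:ℝ) else 0) + (if i = k then 1*c else 0) := by rw [hd₁]
    rw [Pi.neg_apply, hv]
    split_ifs <;> ring
  obtain ⟨t₁, ht₁, y, hyeq, hyK, hysum, hysub, hydisj⟩ :=
    step hn hx hjk hj hk hc (Or.inl rfl) hd₁ H1
  obtain ⟨t₂, ht₂, z, hzeq, hzK, hzsum, hzsub, hzdisj⟩ :=
    step hn hx hjk hj hk hc (Or.inr rfl) hd₂ H1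
  have hy_hull : y ∈ convexHull ℝ S := by
    rcases hydisj with hleft | ⟨hyj, hyk, lst, hlst, hlstt, hlstp⟩
    · apply IH y hyK
      apply Finset.card_lt_card
      rw [Finset.ssubset_iff_of_subset hysub]
      rcases hleft with h | h
      · exact ⟨j, hjmem, h⟩
      · exact ⟨k, hkmem, h⟩
    · exfalso
      have hl₀y : ∑ i, l₀ i * y i = (n:ℝ)-2 := by
        rw [hysum l₀, hperp 1, mul_zero, add_zero, ht₀]
      exact dichotomy hn hyK hjk hyj hyk hlst hl₀ hlstt hl₀y (hlstp.trans hcdef)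
  have hz_hull : z ∈ convexHull ℝ S := by
    rcases hzdisj with hleft | ⟨hzj, hzk, lst, hlst, hlstt, hlstp⟩
    · apply IH z hzK
      apply Finset.card_lt_card
      rw [Finset.ssubset_iff_of_subset hzsub]
      rcases hleft with h | h
      · exact ⟨j, hjmem, h⟩
      · exact ⟨k, hkmem, h⟩
    · exfalso
      have hl₀z : ∑ i, l₀ i * z i = (n:ℝ)-2 := by
        rw [hzsum l₀, hperp (-1), mul_zero, add_zero, ht₀]
      exact dichotomy hn hzK hjk hzj hzk hlst hl₀ hlstt hl₀z (hlstp.trans hcdef)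
  have hz' : z = x - t₂ • d₁ := by
    rw [hzeq, smul_neg, ← sub_eq_add_neg]
  exact segment_mem ht₁ ht₂ (hyeq ▸ hy_hull) (hz' ▸ hz_hull)

lemma vertex_hull {n : ℕ} (hn : 2 ≤ n) {x : Fin n → ℝ} (hx : x ∈ NPoly n ((n:ℝ)-2))
    (h0 : (fracset n x).card = 0) :
    x ∈ convexHull ℝ {v : Fin n → ℝ | (∀ i, v i = 1 ∨ v i = -1) ∧ (∏ i, v i) = 1} := by
  have hv : ∀ i, x i = 1 ∨ x i = -1 := by
    intro i
    by_contra h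
    push_neg at h
    have : i ∈ fracset n x := mem_fracset.mpr h
    rw [Finset.card_eq_zero.mp h0] at this
    exact absurd this (Finset.notMem_empty i)
  exact subset_convexHull ℝ _ ⟨hv, all_vertex_even hn hx hv⟩

lemma mem_hull {n : ℕ} (hn : 2 ≤ n) :
    ∀ (m : ℕ) (x : Fin n → ℝ), x ∈ NPoly n ((n:ℝ)-2) → (fracset n x).card ≤ m →
    x ∈ convexHull ℝ {v : Fin n → ℝ | (∀ i, v i = 1 ∨ v i = -1) ∧ (∏ i, v i) = 1} := by
  intro m
  induction m with
  | zero => exact fun x hx hc => vertex_hull hn hx (Nat.le_zero.mp hc)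
  | succ m ih =>
    intro x hx hc
    by_cases h0 : (fracset n x).card = 0
    · exact vertex_hull hn hx h0
    · obtain ⟨j, hjmem⟩ := Finset.card_pos.mp (Nat.pos_of_ne_zero h0)
      have hjprop := mem_fracset.mp hjmem
      have hj : |x j| < 1 := frac_abs_lt hx.1 hjprop.1 hjprop.2
      obtain ⟨k, hkj, hk⟩ : ∃ k, k ≠ j ∧ |x k| < 1 := by
        by_contra hcon
        push_neg at hcon
        apply not_single_frac hn hx hj
        intro i hi
        by_contra hii
        push_neg at hii
        exact absurd (frac_abs_lt hx.1 hii.1 hii.2) (not_lt.mpr (hcon i hi))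
      have hjk : j ≠ k := Ne.symm hkj
      have IH : ∀ w, w ∈ NPoly n ((n:ℝ)-2) → (fracset n w).card < (fracset n x).card →
          w ∈ convexHull ℝ {v : Fin n → ℝ | (∀ i, v i = 1 ∨ v i = -1) ∧ (∏ i, v i) = 1} :=
        fun w hw hlt => ih w hw (by omega)
      by_cases hastight : ∃ l, IsOddSign n l ∧ ∑ i, l i * x i = (n:ℝ)-2
      · obtain ⟨l₀, hl₀, htt⟩ := hastight
        exact tight_case hn hx hjk hj hk hl₀ htt IH
      · push_neg at hastight
        have H1 : ∀ l, IsOddSign n l → ∑ i, l i * x i = (n:ℝ)-2 → l k ≠ (1:ℝ) * l j :=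
          fun l hl ht => absurd ht (hastight l hl)
        set d₁ : Fin n → ℝ := fun i => (if i = j then (1:ℝ) else 0) + (if i = k then 1*1 else 0)
          with hd₁
        have hd₂ : (-d₁) = fun i =>
            (if i = j then (-1:ℝ) else 0) + (if i = k then (-1)*1 else 0) := by
          funext i
          have hv : d₁ i = (if i = j then (1:ℝ) else 0) + (if i = k then 1*1 else 0) := by
            rw [hd₁]
          rw [Pi.neg_apply, hv]
          split_ifs <;> ring
        obtain ⟨t₁, ht₁, y, hyeq, hyK, hysum, hysub, hydisj⟩ :=
          step hn hx hjk hj hk (Or.inl rfl) (Or.inl rfl) hd₁ H1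
        obtain ⟨t₂, ht₂, z, hzeq, hzK, hzsum, hzsub, hzdisj⟩ :=
          step hn hx hjk hj hk (Or.inl rfl) (Or.inr rfl) hd₂ H1
        have hjmem' : j ∈ fracset n x := abs_lt_mem_fracset hj
        have hkmem' : k ∈ fracset n x := abs_lt_mem_fracset hk
        have hy_hull : y ∈ convexHull ℝ
            {v : Fin n → ℝ | (∀ i, v i = 1 ∨ v i = -1) ∧ (∏ i, v i) = 1} := by
          rcases hydisj with hleft | ⟨hyj, hyk, lst, hlst, hlstt, hlstp⟩
          · apply IH y hyK
            apply Finset.card_lt_card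
            rw [Finset.ssubset_iff_of_subset hysub]
            rcases hleft with h | h
            · exact ⟨j, hjmem', h⟩
            · exact ⟨k, hkmem', h⟩
          · refine tight_case hn hyK hjk hyj hyk hlst hlstt (fun w hw hlt => ih w hw ?_)
            have := Finset.card_le_card hysub
            omega
        have hz_hull : z ∈ convexHull ℝ
            {v : Fin n → ℝ | (∀ i, v i = 1 ∨ v i = -1) ∧ (∏ i, v i) = 1} := by
          rcases hzdisj with hleft | ⟨hzj, hzk, lst, hlst, hlstt, hlstp⟩
          · apply IH z hzK
            apply Finset.card_lt_card
            rw [Finset.ssubset_iff_of_subset hzsub]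
            rcases hleft with h | h
            · exact ⟨j, hjmem', h⟩
            · exact ⟨k, hkmem', h⟩
          · refine tight_case hn hzK hjk hzj hzk hlst hlstt (fun w hw hlt => ih w hw ?_)
            have := Finset.card_le_card hzsub
            omega
        have hz' : z = x - t₂ • d₁ := by
          rw [hzeq, smul_neg, ← sub_eq_add_neg]
        exact segment_mem ht₁ ht₂ (hyeq ▸ hy_hull) (hz' ▸ hz_hull)

lemma npoly_convex' (n : ℕ) (Δ : ℝ) : Convex ℝ (NPoly n Δ) := by
  rintro x ⟨hxc, hx⟩ y ⟨hyc, hy⟩ a b ha hb hab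
  constructor
  · intro i
    exact convex_Icc (-1:ℝ) 1 (hxc i) (hyc i) ha hb hab
  · intro l hl
    have key : ∑ i, l i * (a • x + b • y) i
        = a * (∑ i, l i * x i) + b * (∑ i, l i * y i) := by
      simp only [Pi.add_apply, Pi.smul_apply, smul_eq_mul, Finset.mul_sum]
      rw [← Finset.sum_add_distrib]
      exact Finset.sum_congr rfl (fun i _ => by ring)
    rw [key]
    calc a * (∑ i, l i * x i) + b * (∑ i, l i * y i) ≤ a * Δ + b * Δ := by
          gcongr <;> [exact hx l hl; exact hy l hl]
      _ = Δ := by rw [← add_mul, hab, one_mul]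

lemma npoly_bot {n : ℕ} (hn : 2 ≤ n) :
    NPoly n ((n:ℝ)-2) =
      convexHull ℝ {v : Fin n → ℝ | (∀ i, v i = 1 ∨ v i = -1) ∧ (∏ i, v i) = 1} := by
  apply Set.Subset.antisymm
  · intro x hx
    exact mem_hull hn (fracset n x).card x hx le_rfl
  · exact convexHull_min (fun v hv => even_vertex_mem hn hv.1 hv.2) (npoly_convex' n _)

theorem stmt9 (n : ℕ) (hn : 2 ≤ n) (Δ : ℝ) (hΔ1 : (n:ℝ) - 2 ≤ Δ) (hΔ2 : Δ ≤ n) :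
    NPoly n Δ = {x | x ∈ Cube n ∧ s1 n x ≤ Δ} ∧
    Convex ℝ (NPoly n Δ) ∧
    IsCompact (NPoly n Δ) ∧
    NPoly n n = Cube n ∧
    NPoly n ((n:ℝ) - 2) =
      convexHull ℝ {v : Fin n → ℝ | (∀ i, v i = 1 ∨ v i = -1) ∧ (∏ i, v i) = 1} :=
  ⟨npoly_eq_s1 n hn Δ, npoly_convex n Δ, npoly_compact n Δ, npoly_top n, npoly_bot hn⟩
end

section
/- Let x ∈ ℝⁿ, n−2 ≤ Δ ≤ n with s₁(x) > Δ, and 1 ≤ p < ∞. Then the L_p-distance from x to N(Δ) = {y ∈ [−1,1]ⁿ : s₁(y) ≤ Δ}, assuming x ∈ [−1,1]ⁿ, equals n^{(1−p)/p}·(s₁(x) − Δ). -/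
open Finset

theorem stmt11 (n : ℕ) (hn : 2 ≤ n) (Δ p : ℝ) (hΔ1 : (n:ℝ) - 2 ≤ Δ) (hΔ2 : Δ ≤ n)
    (hp : 1 ≤ p) (x : Fin n → ℝ) (hx : x ∈ Cube n) (hs : Δ < s1 n x) :
    sInf {d : ℝ | ∃ y ∈ NPoly n Δ, (∑ i, |x i - y i| ^ p) ^ (1 / p) = d}
      = (n : ℝ) ^ ((1 - p) / p) * (s1 n x - Δ) := by
  classical
  have hn0 : (0:ℝ) < n := by
    have : (0:ℕ) < n := by omega
    exact_mod_cast this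
  have hn1 : (1:ℝ) ≤ n := by
    have : (1:ℕ) ≤ n := by omega
    exact_mod_cast this
  have hnne : (n:ℝ) ≠ 0 := ne_of_gt hn0
  have hp0 : (0:ℝ) < p := lt_of_lt_of_le one_pos hp
  have hpne : p ≠ 0 := ne_of_gt hp0
  haveI : NeZero n := ⟨by omega⟩
  -- finiteness and nonemptiness of the set of odd sign vectors
  have hfin : ({l | IsOddSign n l} : Set (Fin n → ℝ)).Finite := by
    have hpi : (Set.pi Set.univ (fun _ : Fin n => ({1, -1} : Set ℝ))).Finite :=
      Set.Finite.pi (fun _ => (Set.finite_singleton (-1:ℝ)).insert 1)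
    apply Set.Finite.subset hpi
    intro l hl
    intro i _
    rcases hl.1 i with h | h <;> simp [h]
  have hne : ({l | IsOddSign n l} : Set (Fin n → ℝ)).Nonempty := by
    refine ⟨fun i => if i = 0 then -1 else 1, ⟨fun i => ?_, ?_⟩⟩
    · by_cases h : i = 0 <;> simp [h]
    · rw [Finset.prod_eq_single (0 : Fin n)]
      · simp
      · intro b _ hb; simp [hb]
      · intro h; exact absurd (Finset.mem_univ _) h
  -- the sup is attained
  have hmem : s1 n x ∈ ((fun l => ∑ i, l i * x i) '' {l | IsOddSign n l}) :=
    (hne.image _).csSup_mem (hfin.image _)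
  obtain ⟨l, hl, hlsum⟩ := hmem
  simp only at hlsum
  have hx1 : ∀ i, |x i| ≤ 1 := fun i => abs_le.2 ⟨(hx i).1, (hx i).2⟩
  have hlabs : ∀ i, |l i| = 1 := fun i => by rcases hl.1 i with h | h <;> simp [h]
  have hlx : ∀ i, l i * x i ≤ 1 := by
    intro i
    calc l i * x i ≤ |l i * x i| := le_abs_self _
      _ = |x i| := by rw [abs_mul, hlabs, one_mul]
      _ ≤ 1 := hx1 i
  have hs1n : s1 n x ≤ n := by
    rw [← hlsum]
    calc ∑ i, l i * x i ≤ ∑ _i : Fin n, (1:ℝ) := Finset.sum_le_sum (fun i _ => hlx i)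
      _ = n := by simp
  set e : ℝ := s1 n x - Δ with he_def
  have he : 0 < e := sub_pos.2 hs
  set t : ℝ := e / n with ht_def
  have ht0 : 0 < t := div_pos he hn0
  have htn : t * n = e := div_mul_cancel₀ e hnne
  have hte : t ≤ e := div_le_self he.le hn1
  -- per-coordinate lower bound
  have hA : ∀ i, s1 n x - ((n:ℝ) - 1) ≤ l i * x i := by
    intro i
    have hsum : ∑ j ∈ Finset.univ.erase i, l j * x j ≤ (n:ℝ) - 1 := by
      calc ∑ j ∈ Finset.univ.erase i, l j * x j
          ≤ ∑ _j ∈ Finset.univ.erase i, (1:ℝ) := Finset.sum_le_sum (fun j _ => hlx j)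
        _ = ((Finset.univ.erase i).card : ℝ) := by simp
        _ = (n:ℝ) - 1 := by
            rw [Finset.card_erase_of_mem (Finset.mem_univ i), Finset.card_univ,
              Fintype.card_fin]
            have h1 : 1 ≤ n := by omega
            push_cast [h1]
            ring
    have hsplit := Finset.add_sum_erase Finset.univ (fun j => l j * x j) (Finset.mem_univ i)
    rw [hlsum] at hsplit
    linarith
  have htle : ∀ i, t ≤ 1 + l i * x i := by
    intro i
    have h1 := hA i
    have h2 : s1 n x = Δ + e := by rw [he_def]; ring
    linarith
  set y : Fin n → ℝ := fun i => x i - t * l i with hy_def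
  have hycube : y ∈ Cube n := by
    intro i
    have hbound := htle i
    have hxi := hx i
    rcases hl.1 i with h | h
    · rw [h] at hbound
      constructor
      · simp only [hy_def, h, mul_one]
        linarith [hxi.1]
      · simp only [hy_def, h, mul_one]
        linarith [hxi.2, ht0.le]
    · rw [h] at hbound
      constructor
      · simp only [hy_def, h, mul_neg_one]
        linarith [hxi.1, ht0.le]
      · simp only [hy_def, h, mul_neg_one]
        linarith [hxi.2]
  have hyN : y ∈ NPoly n Δ := by
    refine ⟨hycube, ?_⟩
    intro μ hμ
    set S : Finset (Fin n) := Finset.univ.filter (fun i => μ i ≠ l i) with hS_def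
    set k : ℕ := S.card with hk_def
    have hknat : k ≤ n := by
      calc k ≤ Finset.univ.card := Finset.card_filter_le _ _
        _ = n := by simp
    have hkn : (k:ℝ) ≤ n := by exact_mod_cast hknat
    have hμl : ∀ i, μ i * l i = if i ∈ S then (-1:ℝ) else 1 := by
      intro i
      by_cases hi : μ i = l i
      · have hiS : i ∉ S := by simp [hS_def, hi]
        rw [if_neg hiS, hi]
        rcases hl.1 i with h | h <;> simp [h]
      · have hiS : i ∈ S := by simp [hS_def, hi]
        rw [if_pos hiS]
        rcases hl.1 i with h | h <;> rcases hμ.1 i with h' | h' <;> simp_all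
    have hμS : ∀ i ∈ S, μ i = -l i := by
      intro i hi
      have h1 := hμl i
      rw [if_pos hi] at h1
      have hll : l i * l i = 1 := by rcases hl.1 i with h | h <;> rw [h] <;> norm_num
      calc μ i = μ i * (l i * l i) := by rw [hll, mul_one]
        _ = (μ i * l i) * l i := by ring
        _ = -l i := by rw [h1]; ring
    have hμSc : ∀ i ∈ Sᶜ, μ i = l i := by
      intro i hi
      have : i ∉ S := Finset.mem_compl.1 hi
      simp [hS_def] at this
      exact this
    have hpar : Even k := by
      have h1 : ∏ i, (μ i * l i) = 1 := by
        rw [Finset.prod_mul_distrib, hμ.2, hl.2]; norm_num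
      have h2 : ∏ i, (μ i * l i) = (-1:ℝ)^k := by
        calc ∏ i, (μ i * l i) = ∏ i, (if i ∈ S then (-1:ℝ) else 1) :=
              Finset.prod_congr rfl (fun i _ => hμl i)
          _ = ∏ _i ∈ S, (-1:ℝ) := Fintype.prod_ite_mem S (fun _ => (-1:ℝ))
          _ = (-1:ℝ)^k := by rw [Finset.prod_const]
      rw [h1] at h2
      exact (neg_one_pow_eq_one_iff_even (by norm_num : (-1:ℝ) ≠ 1)).1 h2.symm
    -- sum of μ i * l i
    have hcardc : (Sᶜ.card : ℝ) = (n:ℝ) - k := by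
      rw [Finset.card_compl, Fintype.card_fin]
      rw [← hk_def, Nat.cast_sub hknat]
    have hs1 : ∑ i ∈ S, μ i * l i = -(k:ℝ) := by
      calc ∑ i ∈ S, μ i * l i = ∑ _i ∈ S, (-1:ℝ) :=
            Finset.sum_congr rfl (fun i hi => by rw [hμl i, if_pos hi])
        _ = -(k:ℝ) := by rw [Finset.sum_const, hk_def]; simp
    have hs2 : ∑ i ∈ Sᶜ, μ i * l i = (n:ℝ) - k := by
      calc ∑ i ∈ Sᶜ, μ i * l i = ∑ _i ∈ Sᶜ, (1:ℝ) :=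
            Finset.sum_congr rfl (fun i hi => by rw [hμl i, if_neg (Finset.mem_compl.1 hi)])
        _ = (Sᶜ.card : ℝ) := by rw [Finset.sum_const]; simp
        _ = (n:ℝ) - k := hcardc
    have hsumμl : ∑ i, (μ i * l i) = (n:ℝ) - 2*k := by
      rw [← Finset.sum_add_sum_compl S (fun i => μ i * l i), hs1, hs2]
      ring
    -- sum of μ i * x i
    set A : ℝ := ∑ i ∈ S, l i * x i with hA_def
    have hxs : ∑ i ∈ S, μ i * x i = -A := by
      rw [hA_def, ← Finset.sum_neg_distrib]
      exact Finset.sum_congr rfl (fun i hi => by rw [hμS i hi]; ring)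
    have hxsc : ∑ i ∈ Sᶜ, μ i * x i = ∑ i ∈ Sᶜ, l i * x i := by
      exact Finset.sum_congr rfl (fun i hi => by rw [hμSc i hi])
    have hsplit2 : A + ∑ i ∈ Sᶜ, l i * x i = s1 n x := by
      rw [hA_def, Finset.sum_add_sum_compl S (fun i => l i * x i), hlsum]
    have hsumμx : ∑ i, (μ i * x i) = s1 n x - 2*A := by
      rw [← Finset.sum_add_sum_compl S (fun i => μ i * x i), hxs, hxsc]
      linarith
    -- lower bound on A
    have hAlow : s1 n x - ((n:ℝ) - k) ≤ A := by
      have hcsum : ∑ i ∈ Sᶜ, l i * x i ≤ (n:ℝ) - k := by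
        calc ∑ i ∈ Sᶜ, l i * x i ≤ ∑ _i ∈ Sᶜ, (1:ℝ) := Finset.sum_le_sum (fun i _ => hlx i)
          _ = (Sᶜ.card : ℝ) := by rw [Finset.sum_const]; simp
          _ = (n:ℝ) - k := hcardc
      linarith
    -- key: A ≥ t * k
    have hAtk : t * (k:ℝ) ≤ A := by
      rcases Nat.eq_zero_or_pos k with hk0 | hkpos
      · have hS0 : S = ∅ := Finset.card_eq_zero.1 (by rw [← hk_def]; exact hk0)
        rw [hA_def, hS0, Finset.sum_empty, hk0]
        simp
      · have hk2 : 2 ≤ k := by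
          obtain ⟨m, hm⟩ := hpar
          omega
        have hk2' : (2:ℝ) ≤ k := by exact_mod_cast hk2
        have h2 : s1 n x = Δ + e := by rw [he_def]; ring
        -- A ≥ s1 - (n - k) ≥ e - 2 + k ... need t*k ≤ s1 - n + k
        have hkey : t * (k:ℝ) ≤ s1 n x - ((n:ℝ) - k) := by
          nlinarith [mul_nonneg ht0.le (sub_nonneg.2 hkn), htn, hte]
        linarith
    -- conclude
    have hyi : ∀ i, μ i * y i = μ i * x i - t * (μ i * l i) := by
      intro i; simp only [hy_def]; ring
    have hsumy : ∑ i, μ i * y i = (∑ i, μ i * x i) - t * ∑ i, (μ i * l i) := by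
      rw [Finset.mul_sum, ← Finset.sum_sub_distrib]
      exact Finset.sum_congr rfl (fun i _ => hyi i)
    rw [hsumy, hsumμx, hsumμl]
    have hexpand : t * ((n:ℝ) - 2*k) = t * n - 2*(t*k) := by ring
    rw [hexpand]
    linarith
  -- distance of y to x
  have habs : ∀ i, |x i - y i| = t := by
    intro i
    simp only [hy_def]
    rw [sub_sub_cancel, abs_mul, hlabs i, mul_one, abs_of_pos ht0]
  have hexp : (1-p)/p = 1/p - 1 := by
    rw [sub_div, div_self hpne]
  have hc : (n:ℝ)^((1-p)/p) = (n:ℝ)^(1/p) / n := by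
    rw [hexp, Real.rpow_sub hn0, Real.rpow_one]
  have hd0 : (∑ i, |x i - y i| ^ p) ^ (1/p) = (n:ℝ) ^ ((1-p)/p) * e := by
    have h1 : ∀ i, |x i - y i| ^ p = t ^ p := fun i => by rw [habs i]
    rw [Finset.sum_congr rfl (fun i _ => h1 i), Finset.sum_const, Finset.card_univ,
      Fintype.card_fin, nsmul_eq_mul]
    rw [Real.mul_rpow hn0.le (Real.rpow_nonneg ht0.le p)]
    rw [← Real.rpow_mul ht0.le, mul_one_div_cancel hpne, Real.rpow_one]
    rw [hc, ht_def]
    ring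
  -- lower bound for all distances
  have hlb : ∀ d ∈ {d : ℝ | ∃ y ∈ NPoly n Δ, (∑ i, |x i - y i| ^ p) ^ (1 / p) = d},
      (n:ℝ)^((1-p)/p) * e ≤ d := by
    rintro d ⟨y', hy', rfl⟩
    set a : Fin n → ℝ := fun i => |x i - y' i| with ha_def
    have ha0 : ∀ i, 0 ≤ a i := fun i => abs_nonneg _
    have hsum_e : e ≤ ∑ i, a i := by
      have h1 : ∑ i, l i * y' i ≤ Δ := hy'.2 l hl
      have h2 : ∀ i, l i * x i - l i * y' i ≤ a i := by
        intro i
        calc l i * x i - l i * y' i = l i * (x i - y' i) := by ring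
          _ ≤ |l i * (x i - y' i)| := le_abs_self _
          _ = a i := by rw [abs_mul, hlabs i, one_mul]
      calc e = s1 n x - Δ := he_def
        _ ≤ (∑ i, l i * x i) - ∑ i, l i * y' i := by rw [hlsum]; linarith
        _ = ∑ i, (l i * x i - l i * y' i) := (Finset.sum_sub_distrib _ _).symm
        _ ≤ ∑ i, a i := Finset.sum_le_sum (fun i _ => h2 i)
    have hw' : ∑ _i : Fin n, (n:ℝ)⁻¹ = 1 := by
      rw [Finset.sum_const, Finset.card_univ, Fintype.card_fin, nsmul_eq_mul,
        mul_inv_cancel₀ hnne]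
    have hmean := Real.arith_mean_le_rpow_mean Finset.univ (fun _ => (n:ℝ)⁻¹) a
      (fun i _ => by positivity) hw' (fun i _ => ha0 i) hp
    rw [← Finset.mul_sum, ← Finset.mul_sum] at hmean
    rw [Real.mul_rpow (by positivity) (Finset.sum_nonneg (fun i _ =>
      Real.rpow_nonneg (ha0 i) p))] at hmean
    rw [Real.inv_rpow hn0.le] at hmean
    have hnp : (0:ℝ) < (n:ℝ)^(1/p) := Real.rpow_pos_of_pos hn0 _
    have key : (n:ℝ)^((1-p)/p) * (∑ i, a i) ≤ (∑ i, a i ^ p)^(1/p) := by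
      rw [hc]
      calc (n:ℝ)^(1/p)/n * (∑ i, a i) = (n:ℝ)^(1/p) * ((n:ℝ)⁻¹ * ∑ i, a i) := by ring
        _ ≤ (n:ℝ)^(1/p) * (((n:ℝ)^(1/p))⁻¹ * (∑ i, a i ^ p)^(1/p)) :=
            mul_le_mul_of_nonneg_left hmean hnp.le
        _ = (∑ i, a i ^ p)^(1/p) := by field_simp
    calc (n:ℝ)^((1-p)/p) * e ≤ (n:ℝ)^((1-p)/p) * (∑ i, a i) :=
          mul_le_mul_of_nonneg_left hsum_e (Real.rpow_nonneg hn0.le _)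
      _ ≤ (∑ i, a i ^ p)^(1/p) := key
  -- assemble
  apply le_antisymm
  · exact csInf_le ⟨(n:ℝ)^((1-p)/p) * e, fun d hd => hlb d hd⟩ ⟨y, hyN, hd0⟩
  · exact le_csInf ⟨_, ⟨y, hyN, hd0⟩⟩ hlb
end

section
/- Let n ≥ 2, and for i = 1,...,n (indices mod n) let e_i^i, e_{i⊕1}^i ∈ [−1,1] be given. Define δ = ∑ᵢ |e_i^i − e_i^{i⊖1}| and the box R = ∏ᵢ [ |e_i^i + e_{i⊕1}^i| − 1, 1 − |e_i^i − e_{i⊕1}^i| ]. Then every even vertex x of R (a vertex taking the left endpoint in an even number of coordinates) satisfies s₁(x) ≤ n − 2 + δ, where s₁(x) = max over odd sign vectors λ of ∑λᵢ x_{i,i⊕1}. -/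
open Finset

open Fin.NatCast

lemma chain2 (A B L : ℕ → ℝ) (hL : ∀ t, |L t| = 1) (m : ℕ) :
    |A 0 - (∏ t ∈ range m, L t) * A m| ≤
      ∑ t ∈ range m, (|A t - B t| + |B t - L t * A (t+1)|) := by
  induction m with
  | zero => simp
  | succ m ih =>
    rw [prod_range_succ, sum_range_succ]
    have hP : |∏ t ∈ range m, L t| = 1 := by rw [Finset.abs_prod]; simp [hL]
    calc |A 0 - (∏ t ∈ range m, L t) * L m * A (m+1)|
        ≤ |A 0 - (∏ t ∈ range m, L t) * A m|
          + |(∏ t ∈ range m, L t) * A m - (∏ t ∈ range m, L t) * L m * A (m+1)| :=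
          abs_sub_le _ _ _
      _ ≤ _ := by
          refine add_le_add ih ?_
          have h : (∏ t ∈ range m, L t) * A m - (∏ t ∈ range m, L t) * L m * A (m+1)
              = (∏ t ∈ range m, L t) * (A m - L m * A (m+1)) := by ring
          rw [h, abs_mul, hP, one_mul]
          exact abs_sub_le _ _ _

lemma reindex_sum (n : ℕ) [NeZero n] (f : Fin n → ℝ) (j : Fin n) :
    ∑ t ∈ range n, f (j + (t : Fin n)) = ∑ i, f i := by
  rw [← Fin.sum_univ_eq_sum_range (fun t => f (j + (t : Fin n))) n]
  simp only [Fin.cast_val_eq_self]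
  exact Fintype.sum_equiv (Equiv.addLeft j) _ _ (fun i => rfl)

lemma reindex_prod (n : ℕ) [NeZero n] (f : Fin n → ℝ) (j : Fin n) :
    ∏ t ∈ range n, f (j + (t : Fin n)) = ∏ i, f i := by
  rw [← Fin.prod_univ_eq_prod_range (fun t => f (j + (t : Fin n))) n]
  simp only [Fin.cast_val_eq_self]
  exact Fintype.prod_equiv (Equiv.addLeft j) _ _ (fun i => rfl)

lemma chainA (n : ℕ) [NeZero n] (a b l : Fin n → ℝ)
    (hl : ∀ i, l i = 1 ∨ l i = -1) (hprod : (∏ i, l i) = -1) (j : Fin n) :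
    2 * |a j| ≤ (∑ i, |a i - l i * b i|) + ∑ i, |a i - b (i - 1)| := by
  have habs : ∀ i, |l i| = 1 := by
    intro i; rcases hl i with h | h <;> simp [h]
  have key := chain2 (fun t => a (j + (t : Fin n))) (fun t => l (j + (t : Fin n)) * b (j + (t : Fin n)))
      (fun t => l (j + (t : Fin n))) (fun t => habs _) n
  rw [reindex_prod n l j, hprod] at key
  rw [show ((n : ℕ) : Fin n) = 0 from Fin.natCast_self n] at key
  simp only [Nat.cast_zero, add_zero] at key
  have h2 : |a j - (-1) * a j| = 2 * |a j| := by
    rw [show a j - (-1) * a j = 2 * a j by ring, abs_mul]; norm_num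
  rw [h2] at key
  refine key.trans ?_
  rw [sum_add_distrib]
  apply add_le_add
  · rw [← reindex_sum n (fun i => |a i - l i * b i|) j]
  · rw [← reindex_sum n (fun i => |a i - b (i - 1)|) (j + 1)]
    apply le_of_eq
    apply Finset.sum_congr rfl
    intro t _
    have hc : ((t + 1 : ℕ) : Fin n) = (t : Fin n) + 1 := by push_cast; ring
    have h1 : j + 1 + (t:Fin n) = j + (t:Fin n) + 1 := by open Fin.CommRing in ring
    have h2' : j + (t:Fin n) + 1 - 1 = j + (t:Fin n) := by open Fin.CommRing in ring
    have e1 : l (j + (t:Fin n)) * b (j + (t:Fin n)) - l (j + (t:Fin n)) * a (j + (t:Fin n) + 1)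
        = l (j + (t:Fin n)) * (b (j + (t:Fin n)) - a (j + (t:Fin n) + 1)) := by ring
    rw [hc, ← add_assoc, h1, h2', e1, abs_mul, habs, one_mul, abs_sub_comm]

lemma chainB (n : ℕ) [NeZero n] (a b l : Fin n → ℝ)
    (hl : ∀ i, l i = 1 ∨ l i = -1) (hprod : (∏ i, l i) = -1) (j : Fin n) :
    2 * |b j| ≤ (∑ i, |a i - l i * b i|) + ∑ i, |a i - b (i - 1)| := by
  have habs : ∀ i, |l i| = 1 := by
    intro i; rcases hl i with h | h <;> simp [h]
  have key := chain2 (fun t => b (j + (t : Fin n))) (fun t => a (j + (t : Fin n) + 1))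
      (fun t => l (j + (t : Fin n) + 1)) (fun t => habs _) n
  have hre : (∏ t ∈ range n, l (j + (t : Fin n) + 1)) = -1 := by
    rw [show (∏ t ∈ range n, l (j + (t:Fin n) + 1)) = ∏ t ∈ range n, l ((j+1) + (t:Fin n)) from
      Finset.prod_congr rfl (fun t _ => by rw [show (j+1) + (t:Fin n) = j + (t:Fin n) + 1 by open Fin.CommRing in ring]),
      reindex_prod n l (j+1), hprod]
  rw [hre] at key
  rw [show ((n : ℕ) : Fin n) = 0 from Fin.natCast_self n] at key
  simp only [Nat.cast_zero, add_zero] at key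
  have h2 : |b j - (-1) * b j| = 2 * |b j| := by
    rw [show b j - (-1) * b j = 2 * b j by ring, abs_mul]; norm_num
  rw [h2] at key
  refine key.trans ?_
  rw [sum_add_distrib, add_comm ((∑ i, |a i - l i * b i|)) _]
  apply add_le_add
  · rw [← reindex_sum n (fun i => |a i - b (i - 1)|) (j + 1)]
    apply le_of_eq
    apply Finset.sum_congr rfl
    intro t _
    have h1 : j + 1 + (t:Fin n) = j + (t:Fin n) + 1 := by open Fin.CommRing in ring
    have h2' : j + (t:Fin n) + 1 - 1 = j + (t:Fin n) := by open Fin.CommRing in ring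
    rw [h1, h2', abs_sub_comm]
  · rw [← reindex_sum n (fun i => |a i - l i * b i|) (j + 1)]
    apply le_of_eq
    apply Finset.sum_congr rfl
    intro t _
    have hc : ((t + 1 : ℕ) : Fin n) = (t : Fin n) + 1 := by push_cast; ring
    have h1 : j + 1 + (t:Fin n) = j + (t:Fin n) + 1 := by open Fin.CommRing in ring
    rw [hc, ← add_assoc, h1]


lemma aux2 (A B : ℝ) : |A + B| + |A - B| = 2 * max |A| |B| := by
  rcases abs_cases (A+B) with ⟨h1,h1'⟩|⟨h1,h1'⟩ <;>
  rcases abs_cases (A-B) with ⟨h2,h2'⟩|⟨h2,h2'⟩ <;>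
  rcases abs_cases A with ⟨h3,h3'⟩|⟨h3,h3'⟩ <;>
  rcases abs_cases B with ⟨h4,h4'⟩|⟨h4,h4'⟩ <;>
  rcases max_cases |A| |B| with ⟨h5,h5'⟩|⟨h5,h5'⟩ <;> linarith

lemma pointwise (A B L : ℝ) (hA1 : -1 ≤ A) (hA2 : A ≤ 1) (hB1 : -1 ≤ B) (hB2 : B ≤ 1)
    (hL : L = 1 ∨ L = -1) (c : Bool) :
    L * (if c then |A + B| - 1 else 1 - |A - B|) ≤ 1 - |A - L * B| := by
  have key : |A + B| + |A - B| ≤ 2 := by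
    rcases abs_cases (A+B) with ⟨h1,_⟩|⟨h1,_⟩ <;> rcases abs_cases (A-B) with ⟨h2,_⟩|⟨h2,_⟩ <;>
      linarith
  rcases hL with rfl | rfl <;> cases c <;>
    simp only [Bool.false_eq_true, if_true, if_false, one_mul, neg_one_mul,
      show A - 1 * B = A - B by ring, sub_neg_eq_add] <;> linarith

lemma pointwise_special (A B L : ℝ) (c : Bool)
    (hm : (c = true ∧ L = 1) ∨ (c = false ∧ L = -1)) :
    L * (if c then |A + B| - 1 else 1 - |A - B|) ≤
      1 - |A - L * B| - 2 + 2 * max |A| |B| := by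
  have h2 := aux2 A B
  rcases hm with ⟨rfl, rfl⟩ | ⟨rfl, rfl⟩ <;>
    simp only [Bool.false_eq_true, if_true, if_false, one_mul, neg_one_mul,
      show A - 1 * B = A - B by ring, sub_neg_eq_add] <;> linarith

lemma exists_special (n : ℕ) [NeZero n] (σ : Fin n → Bool)
    (hσ : Even (Finset.univ.filter (fun i => σ i = true)).card)
    (l : Fin n → ℝ) (hl : ∀ i, l i = 1 ∨ l i = -1) (hprod : (∏ i, l i) = -1) :
    ∃ j, (σ j = true ∧ l j = 1) ∨ (σ j = false ∧ l j = -1) := by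
  by_contra hcon
  push_neg at hcon
  have hval : ∀ i, l i = if σ i then (-1:ℝ) else 1 := by
    intro i
    obtain ⟨h1, h2⟩ := hcon i
    cases hσi : σ i with
    | true =>
      simp only [hσi, if_true]
      rcases hl i with h | h
      · exact absurd h (h1 hσi)
      · exact h
    | false =>
      simp only [hσi, Bool.false_eq_true, if_false]
      rcases hl i with h | h
      · exact h
      · exact (h2 hσi h).elim
  rw [Finset.prod_congr rfl (fun i _ => hval i)] at hprod
  rw [Finset.prod_ite, Finset.prod_const, Finset.prod_const, one_pow, mul_one] at hprod
  rw [hσ.neg_one_pow] at hprod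
  norm_num at hprod

lemma key_bound_s14 (n : ℕ) [NeZero n] (a b : Fin n → ℝ)
    (ha : ∀ i, a i ∈ Set.Icc (-1:ℝ) 1) (hb : ∀ i, b i ∈ Set.Icc (-1:ℝ) 1)
    (σ : Fin n → Bool)
    (hσ : Even (Finset.univ.filter (fun i => σ i = true)).card)
    (x : Fin n → ℝ)
    (hxdef : ∀ i, x i = if σ i then |a i + b i| - 1 else 1 - |a i - b i|)
    (l : Fin n → ℝ) (hl : IsOddSign n l) :
    (∑ i, l i * x i) ≤ (n:ℝ) - 2 + ∑ i, |a i - b (i - 1)| := by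
  obtain ⟨hls, hlp⟩ := hl
  obtain ⟨j, hj⟩ := exists_special n σ hσ l hls hlp
  set S := ∑ i, |a i - l i * b i| with hS
  set D := ∑ i, |a i - b (i - 1)| with hD
  have hpt : ∀ i, l i * x i ≤ 1 - |a i - l i * b i| := by
    intro i
    rw [hxdef i]
    exact pointwise _ _ _ (ha i).1 (ha i).2 (hb i).1 (hb i).2 (hls i) (σ i)
  have hjpt : l j * x j ≤ 1 - |a j - l j * b j| - 2 + 2 * max |a j| |b j| := by
    rw [hxdef j]
    exact pointwise_special _ _ _ _ hj
  have hmax : 2 * max |a j| |b j| ≤ S + D := by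
    have h1 := chainA n a b l hls hlp j
    have h2 := chainB n a b l hls hlp j
    rcases max_cases |a j| |b j| with ⟨h, _⟩ | ⟨h, _⟩ <;> rw [h] <;> assumption
  have hsum : ∑ i, l i * x i ≤ (∑ i, (1 - |a i - l i * b i|)) - 2 + 2 * max |a j| |b j| := by
    calc ∑ i, l i * x i
        = (∑ i ∈ univ.erase j, l i * x i) + l j * x j :=
          (Finset.sum_erase_add univ _ (mem_univ j)).symm
      _ ≤ (∑ i ∈ univ.erase j, (1 - |a i - l i * b i|))
            + (1 - |a j - l j * b j| - 2 + 2 * max |a j| |b j|) :=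
          add_le_add (Finset.sum_le_sum fun i _ => hpt i) hjpt
      _ = ((∑ i ∈ univ.erase j, (1 - |a i - l i * b i|)) + (1 - |a j - l j * b j|))
            - 2 + 2 * max |a j| |b j| := by ring
      _ = _ := by rw [Finset.sum_erase_add univ _ (mem_univ j)]
  have hsum2 : ∑ i, ((1:ℝ) - |a i - l i * b i|) = (n:ℝ) - S := by
    rw [Finset.sum_sub_distrib, Finset.sum_const, card_univ, Fintype.card_fin, nsmul_eq_mul,
      mul_one, hS]
  rw [hsum2] at hsum
  linarith

theorem stmt14 (n : ℕ) [NeZero n] (hn : 2 ≤ n) (a b : Fin n → ℝ)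
    (ha : ∀ i, a i ∈ Set.Icc (-1:ℝ) 1) (hb : ∀ i, b i ∈ Set.Icc (-1:ℝ) 1)
    (σ : Fin n → Bool)
    (hσ : Even (Finset.univ.filter (fun i => σ i = true)).card)
    (x : Fin n → ℝ)
    (hxdef : ∀ i, x i = if σ i then |a i + b i| - 1 else 1 - |a i - b i|) :
    s1 n x ≤ (n:ℝ) - 2 + ∑ i, |a i - b (i - 1)| := by
  have hnn : (0:ℝ) ≤ (n:ℝ) - 2 + ∑ i, |a i - b (i - 1)| := by
    have h1 : (2:ℝ) ≤ (n:ℝ) := by exact_mod_cast hn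
    have h2 : (0:ℝ) ≤ ∑ i, |a i - b (i - 1)| :=
      Finset.sum_nonneg fun i _ => abs_nonneg _
    linarith
  apply Real.sSup_le _ hnn
  rintro y ⟨l, hl, rfl⟩
  exact key_bound_s14 n a b ha hb σ hσ x hxdef l hl
end

section
/- Let n ≥ 2 and let real numbers e_{i,i+1} (i = 1,...,n, indices cyclic) be given. Then there exist signs ε₁,...,εₙ ∈ {−1,+1} and a cyclic relabeling such that the modified values e'_{i,i⊕1} = εᵢε_{i⊕1} e_{i,i⊕1} satisfy |e'_{n1}| ≤ e'_{i,i+1} for all i = 1,...,n−1; moreover s₁ is invariant under any such sign change: s₁((εᵢε_{i⊕1}e_{i,i⊕1})ᵢ) = s₁((e_{i,i⊕1})ᵢ). -/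
open Finset

lemma sgnMulSelf {a : ℝ} (h : a = 1 ∨ a = -1) : a * a = 1 := by
  rcases h with h | h <;> simp [h]

lemma sign_abs {a : ℝ} (h : a = 1 ∨ a = -1) : |a| = 1 := by
  rcases h with h | h <;> simp [h]

lemma prod_shift (n : ℕ) [NeZero n] (ε : Fin n → ℝ) :
    ∏ i, ε (i + 1) = ∏ i, ε i :=
  Fintype.prod_equiv (Equiv.addRight 1) _ _ (fun i => rfl)

lemma odd_mul (n : ℕ) [NeZero n] (ε l : Fin n → ℝ)
    (hε : ∀ i, ε i = 1 ∨ ε i = -1) (hl : IsOddSign n l) :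
    IsOddSign n (fun i => ε i * ε (i + 1) * l i) := by
  constructor
  · intro i
    rcases hε i with h1 | h1 <;> rcases hε (i+1) with h2 | h2 <;>
      rcases hl.1 i with h3 | h3 <;> simp [h1, h2, h3]
  · have h : ∏ i, (ε i * ε (i + 1) * l i)
        = ((∏ i, ε i) * ∏ i, ε (i + 1)) * ∏ i, l i := by
      rw [← Finset.prod_mul_distrib, ← Finset.prod_mul_distrib]
    have hsq : (∏ i, ε i) * (∏ i, ε i) = 1 := by
      rw [← Finset.prod_mul_distrib]
      exact Finset.prod_eq_one (fun i _ => sgnMulSelf (hε i))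
    rw [h, prod_shift, hsq, one_mul, hl.2]

theorem stmt15 (n : ℕ) [NeZero n] (hn : 2 ≤ n) (x : Fin n → ℝ) :
    (∃ ε : Fin n → ℝ, (∀ i, ε i = 1 ∨ ε i = -1) ∧
      ∃ k : Fin n, ∀ i, i ≠ k →
        |ε k * ε (k + 1) * x k| ≤ ε i * ε (i + 1) * x i) ∧
    (∀ ε : Fin n → ℝ, (∀ i, ε i = 1 ∨ ε i = -1) →
      s1 n (fun i => ε i * ε (i + 1) * x i) = s1 n x) := by
  constructor
  · -- Part 1: existence of a canonical variant
    open Fin.CommRing in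
    obtain ⟨k, -, hk⟩ := Finset.exists_min_image Finset.univ (fun i => |x i|)
      ⟨0, Finset.mem_univ 0⟩
    set s : Fin n → ℝ := fun i => if x i < 0 then -1 else 1 with hs_def
    have hs_sign : ∀ i, s i = 1 ∨ s i = -1 := by
      intro i
      by_cases h : x i < 0 <;> simp [hs_def, h]
    have hs : ∀ i, s i * x i = |x i| := by
      intro i
      by_cases h : x i < 0
      · simp [hs_def, h, abs_of_neg h]
      · simp [hs_def, h, abs_of_nonneg (not_lt.mp h)]
    set g : ℕ → ℝ := fun m => ∏ t ∈ Finset.range m, s (k + 1 + (t : Fin n)) with hg_def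
    have hg_succ : ∀ m, g (m + 1) = g m * s (k + 1 + (m : Fin n)) := by
      intro m
      simp [hg_def, Finset.prod_range_succ]
    have hg_sign : ∀ m, g m = 1 ∨ g m = -1 := by
      intro m
      induction m with
      | zero => left; simp [hg_def]
      | succ m ih =>
        rw [hg_succ]
        rcases ih with h1 | h1 <;> rcases hs_sign (k + 1 + (m : Fin n)) with h2 | h2 <;>
          simp [h1, h2]
    set ε : Fin n → ℝ := fun i => g ((i - (k + 1)).val) with hε_def
    have hε_sign : ∀ i, ε i = 1 ∨ ε i = -1 := fun i => hg_sign _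
    have hone : (1 : Fin n).val = 1 := by
      rw [Fin.val_one']
      exact Nat.mod_eq_of_lt hn
    have hcastlast : ((n - 1 : ℕ) : Fin n) = -1 := by
      have h0 : ((n - 1 : ℕ) : Fin n) + 1 = 0 := by
        have h1 : ((n - 1 : ℕ) : Fin n) + ((1 : ℕ) : Fin n) = ((n - 1 + 1 : ℕ) : Fin n) :=
          (Nat.cast_add _ _).symm
        rw [Nat.cast_one] at h1
        rw [h1, show n - 1 + 1 = n by omega, Fin.natCast_self]
      exact eq_neg_of_add_eq_zero_left h0
    have hstep : ∀ i, i ≠ k → ε (i + 1) = ε i * s i := by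
      intro i hi
      set m := (i - (k + 1)).val with hm_def
      have hmlt : m < n := (i - (k + 1)).isLt
      have hmne : m ≠ n - 1 := by
        intro hm1
        apply hi
        have hc : i - (k + 1) = ((n - 1 : ℕ) : Fin n) := by
          rw [← hm1, hm_def, Fin.cast_val_eq_self]
        have : i = (i - (k + 1)) + (k + 1) := (sub_add_cancel i (k + 1)).symm
        rw [hc, hcastlast] at this
        rw [this]; ring
      have hval : (i + 1 - (k + 1)).val = m + 1 := by
        have h1 : i + 1 - (k + 1) = (i - (k + 1)) + 1 := by ring
        rw [h1, Fin.val_add, hone, Nat.mod_eq_of_lt (by omega)]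
      have hfix : k + 1 + ((m : ℕ) : Fin n) = i := by
        rw [hm_def, Fin.cast_val_eq_self]
        ring
      show g ((i + 1 - (k + 1)).val) = g m * s i
      rw [hval, hg_succ, hfix]
    refine ⟨ε, hε_sign, k, fun i hi => ?_⟩
    have h1 : ε i * ε (i + 1) * x i = |x i| := by
      rw [hstep i hi]
      have := sgnMulSelf (hε_sign i)
      rw [show ε i * (ε i * s i) * x i = (ε i * ε i) * (s i * x i) by ring, this, one_mul,
        hs i]
    have h2 : |ε k * ε (k + 1) * x k| = |x k| := by
      rw [abs_mul, abs_mul, sign_abs (hε_sign k), sign_abs (hε_sign (k + 1))]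
      ring
    rw [h1, h2]
    exact hk i (Finset.mem_univ i)
  · -- Part 2: invariance of s1
    intro ε hε
    have key : ((fun l => ∑ i, l i * (ε i * ε (i + 1) * x i)) '' {l | IsOddSign n l})
        = ((fun l => ∑ i, l i * x i) '' {l | IsOddSign n l}) := by
      ext a
      simp only [Set.mem_image, Set.mem_setOf_eq]
      constructor
      · rintro ⟨l, hl, rfl⟩
        refine ⟨fun i => ε i * ε (i + 1) * l i, odd_mul n ε l hε hl, ?_⟩
        exact Finset.sum_congr rfl (fun i _ => by ring)
      · rintro ⟨l, hl, rfl⟩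
        refine ⟨fun i => ε i * ε (i + 1) * l i, odd_mul n ε l hε hl, ?_⟩
        refine Finset.sum_congr rfl (fun i _ => ?_)
        have h1 := sgnMulSelf (hε i)
        have h2 := sgnMulSelf (hε (i + 1))
        show ε i * ε (i + 1) * l i * (ε i * ε (i + 1) * x i) = l i * x i
        calc ε i * ε (i + 1) * l i * (ε i * ε (i + 1) * x i)
            = (ε i * ε i) * ((ε (i + 1) * ε (i + 1)) * (l i * x i)) := by ring
          _ = l i * x i := by rw [h1, h2]; ring
    simp only [s1]
    rw [key]
end

section
/- There exists a set of four ±1-valued random variables measured in three overlapping contexts — bunches (R₁¹,R₂¹,R₃¹), (R₂²,R₃²,R₄²), (R₁³,R₃³,R₄³) with the explicit uniform-over-four-triples distributions given — such that every individual variable is uniform on {−1,+1}, every pair within a bunch is independent (so the system is strongly consistently connected and every cyclic subsystem is noncontextual), yet there is no family of jointly distributed random variables S₁,S₂,S₃,S₄ (one per content) whose restrictions to each context reproduce the three bunch distributions. -/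
open Finset

/-- Bunch distribution uniform on the four ±1-triples with product +1
(encoding +1 as `true`, −1 as `false`). -/
noncomputable def B1 (a b c : Bool) : ℝ := if xor a (xor b c) then 1/4 else 0

/-- Bunch distribution uniform on the four ±1-triples with product −1. -/
noncomputable def B3 (a b c : Bool) : ℝ := if xor a (xor b c) then 0 else 1/4

lemma zero_of_filter_sum_zero {p : (Fin 4 → Bool) → ℝ} (hpos : ∀ s, 0 ≤ p s)
    {P : (Fin 4 → Bool) → Prop} [DecidablePred P] {s : Fin 4 → Bool}
    (hs : P s) (h : (∑ s ∈ Finset.univ.filter P, p s) = 0) : p s = 0 := by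
  have := (Finset.sum_eq_zero_iff_of_nonneg (fun t _ => hpos t)).mp h
  exact this s (by simp [hs])

theorem stmt17 :
    -- all single-variable marginals are uniform and all pairs within a bunch are uniform
    (∀ a b : Bool, (∑ c : Bool, B1 a b c) = 1/4) ∧
    (∀ a c : Bool, (∑ b : Bool, B1 a b c) = 1/4) ∧
    (∀ b c : Bool, (∑ a : Bool, B1 a b c) = 1/4) ∧
    (∀ a b : Bool, (∑ c : Bool, B3 a b c) = 1/4) ∧
    (∀ a c : Bool, (∑ b : Bool, B3 a b c) = 1/4) ∧
    (∀ b c : Bool, (∑ a : Bool, B3 a b c) = 1/4) ∧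
    -- yet there is no global joint distribution on (S₁,S₂,S₃,S₄) whose marginals
    -- on (q₁,q₂,q₃), (q₂,q₃,q₄), (q₁,q₃,q₄) are the three bunch distributions
    ¬ ∃ p : (Fin 4 → Bool) → ℝ,
        (∀ s, 0 ≤ p s) ∧ (∑ s, p s = 1) ∧
        (∀ a b c : Bool,
          (∑ s ∈ Finset.univ.filter (fun s : Fin 4 → Bool => s 0 = a ∧ s 1 = b ∧ s 2 = c), p s)
            = B1 a b c) ∧
        (∀ a b c : Bool,
          (∑ s ∈ Finset.univ.filter (fun s : Fin 4 → Bool => s 1 = a ∧ s 2 = b ∧ s 3 = c), p s)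
            = B1 a b c) ∧
        (∀ a b c : Bool,
          (∑ s ∈ Finset.univ.filter (fun s : Fin 4 → Bool => s 0 = a ∧ s 2 = b ∧ s 3 = c), p s)
            = B3 a b c) := by
  refine ⟨?_, ?_, ?_, ?_, ?_, ?_, ?_⟩
  · intro a b; cases a <;> cases b <;> simp [B1, Fintype.sum_bool] <;> norm_num
  · intro a c; cases a <;> cases c <;> simp [B1, Fintype.sum_bool] <;> norm_num
  · intro b c; cases b <;> cases c <;> simp [B1, Fintype.sum_bool] <;> norm_num
  · intro a b; cases a <;> cases b <;> simp [B3, Fintype.sum_bool] <;> norm_num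
  · intro a c; cases a <;> cases c <;> simp [B3, Fintype.sum_bool] <;> norm_num
  · intro b c; cases b <;> cases c <;> simp [B3, Fintype.sum_bool] <;> norm_num
  · rintro ⟨p, hpos, hsum, h1, h2, h3⟩
    have hz : (∑ s ∈ Finset.univ.filter
        (fun s : Fin 4 → Bool => s 0 = true ∧ s 1 = true ∧ s 2 = true), p s) = 0 := by
      refine Finset.sum_eq_zero ?_
      intro s hs
      simp only [Finset.mem_filter, Finset.mem_univ, true_and] at hs
      obtain ⟨h0, h1', h2'⟩ := hs
      cases h3' : s 3
      · have := h2 (s 1) (s 2) (s 3)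
        rw [h1', h2', h3'] at this
        simp only [B1] at this
        norm_num at this
        exact zero_of_filter_sum_zero hpos ⟨h1', h2', h3'⟩ this
      · have := h3 (s 0) (s 2) (s 3)
        rw [h0, h2', h3'] at this
        simp only [B3] at this
        norm_num at this
        exact zero_of_filter_sum_zero hpos ⟨h0, h2', h3'⟩ this
    rw [h1 true true true] at hz
    simp [B1] at hz
end
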